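/- arXiv:0903.4459 — 2 statements merged into one kernel-verified Lean document; each statement's English description precedes it below -/
import Mathlib

section
/- Let Γ be a colored tree and let A and B be two disjoint finite multisets of edges of Γ. Then Σ_{d ∈ A} w_d = Σ_{d ∈ B} w_d (sums taken with multiplicity in M = Hom(ℤ^g, ℤ)) if and only if A and B can be partitioned into multisets A_1, …, A_r and B_1, …, B_r such that A_l ∼ B_l for every 1 ≤ l ≤ r. -/
noncomputable section
open Classical

/-- A rose tree whose leaves ("colored vertices") carry labels of type `α` and whose
internal vertices ("uncolored vertices") are unlabelled. -/
inductive CTree (α : Type) : Type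
  | leaf (a : α) : CTree α
  | node (ts : List (CTree α)) : CTree α

namespace CTree

variable {α : Type}

/-- The subtree of `t` at a position `p` (a list of child indices), if it exists. -/
def sub : CTree α → List ℕ → Option (CTree α)
  | t, [] => some t
  | leaf _, _ :: _ => none
  | node ts, i :: p =>
      match ts[i]? with
      | some c => sub c p
      | none => none

/-- All lists of natural numbers of length at most `k` with entries `< m`. -/
def allLists (m : ℕ) : ℕ → List (List ℕ)
  | 0 => [[]]
  | k + 1 => [] :: (List.range m).flatMap (fun i => (allLists m k).map (i :: ·))

/-- The finite set of positions of vertices of `t`. -/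
def vertS (t : CTree α) : Finset (List ℕ) :=
  (allLists (sizeOf t) (sizeOf t)).toFinset.filter (fun p => (t.sub p).isSome)

/-- The finite set of positions of uncolored (internal) vertices of `t`. -/
def uncS (t : CTree α) : Finset (List ℕ) :=
  (allLists (sizeOf t) (sizeOf t)).toFinset.filter (fun p => ∃ ts, t.sub p = some (node ts))

/-- The finite set of positions of colored vertices (leaves) of `t`. -/
def colS (t : CTree α) : Finset (List ℕ) :=
  (allLists (sizeOf t) (sizeOf t)).toFinset.filter (fun p => ∃ a, t.sub p = some (leaf a))

/-- Edges of `t` are identified with the positions of non-root vertices (an edge joins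
the vertex at `p ≠ []` to its parent at `p.dropLast`). -/
def edgeS (t : CTree α) : Finset (List ℕ) := (vertS t).erase []

/-- `t` is a colored tree: every internal vertex has at least one child (so the leaves,
i.e. the childless vertices, are exactly the colored vertices) and the root is
uncolored. -/
def IsColoredTree (t : CTree α) : Prop :=
  (∀ p, t.sub p ≠ some (node ([] : List (CTree α)))) ∧ ∃ ts, t = node ts

/-- The weight `w_d ∈ M` of an edge `d`: the sum of the dual basis vectors `e_u^*`
over uncolored vertices `u` that are descendants of the upper endpoint of `d` but not
descendants of the lower endpoint of `d`. -/
def wt (t : CTree α) (d : List ℕ) : List ℕ → ℤ := fun u =>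
  if u ∈ uncS t ∧ d.dropLast <+: u ∧ ¬ d <+: u then 1 else 0

/-- `s_v ∈ M` : the sum of `e_u^*` over the uncolored descendants `u` of `v`;
`s(Γ) = sv t []`. -/
def sv (t : CTree α) (v : List ℕ) : List ℕ → ℤ := fun u =>
  if u ∈ uncS t ∧ v <+: u then 1 else 0

/-- The pairing between `M = Hom(ℤ^g, ℤ)` and `ℤ^g` (both realized as integer-valued
functions on the uncolored vertices of `t`). -/
def pairZ (t : CTree α) (μ x : List ℕ → ℤ) : ℤ := ∑ p ∈ uncS t, μ p * x p

/-- The pairing between `M` and `ℝ^g`. -/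
def pairR (t : CTree α) (μ : List ℕ → ℤ) (x : List ℕ → ℝ) : ℝ :=
  ∑ p ∈ uncS t, (μ p : ℝ) * x p

/-- The multiset of edges of the (downward) path from the vertex `v` to the vertex `c`;
each edge occurs with multiplicity one. -/
def pathEdges (t : CTree α) (v c : List ℕ) : Multiset (List ℕ) :=
  ((edgeS t).filter (fun d => v <+: d ∧ d ≠ v ∧ d <+: c)).val

/-- The relation `A ∼ B` on multisets of edges: `A` and `B` consist exactly of the edges
of two non-self-crossing paths from a common vertex to two colored vertices. -/
def Sim (t : CTree α) (A B : Multiset (List ℕ)) : Prop :=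
  ∃ v ∈ vertS t, ∃ c₁ ∈ colS t, ∃ c₂ ∈ colS t, v <+: c₁ ∧ v <+: c₂ ∧
    A = pathEdges t v c₁ ∧ B = pathEdges t v c₂

/-- `Y` is a minimally complete subset of the set of edges of `t`: every
(non-self-crossing) path from the root to a colored vertex contains exactly one edge
of `Y`. -/
def MinComplete (t : CTree α) (Y : Finset (List ℕ)) : Prop :=
  Y ⊆ edgeS t ∧ ∀ c ∈ colS t, ∃! d, d ∈ Y ∧ d <+: c

/-- The finite set of minimally complete subsets of the edge set of `t`. -/
def MCfin (t : CTree α) : Finset (Finset (List ℕ)) :=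
  (edgeS t).powerset.filter (fun Y => MinComplete t Y)

/-- The dual cone `C(Γ) = {x ∈ ℝ^g | ⟨w_d, x⟩ ≥ 0 for all edges d}`. -/
def dualCone (t : CTree α) : Set (List ℕ → ℝ) :=
  {x | (∀ p, p ∉ uncS t → x p = 0) ∧ ∀ d ∈ edgeS t, 0 ≤ pairR t (wt t d) x}

/-- The ray spanned by a vector `v`. -/
def ray (v : List ℕ → ℝ) : Set (List ℕ → ℝ) := {x | ∃ c : ℝ, 0 ≤ c ∧ x = c • v}

/-- `F` is a one-dimensional face (extreme ray) of the convex cone `C`. -/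
def IsOneDimFace (C F : Set (List ℕ → ℝ)) : Prop :=
  F ⊆ C ∧ (∃ v, v ≠ 0 ∧ F = ray v) ∧
    ∀ x ∈ C, ∀ y ∈ C, x + y ∈ F → x ∈ F ∧ y ∈ F

/-- The convex cone generated by a set `G ⊆ ℤ^g` inside `ℝ^g`: all finite nonnegative
real combinations of elements of `G`. -/
def coneHull (G : Set (List ℕ → ℤ)) : Set (List ℕ → ℝ) :=
  {x | ∃ (F : Finset (List ℕ → ℤ)) (c : (List ℕ → ℤ) → ℝ),
    ↑F ⊆ G ∧ (∀ v ∈ F, 0 ≤ c v) ∧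
    x = ∑ v ∈ F, c v • (fun p => ((v p : ℤ) : ℝ))}

/-- `e_{v_0} ∈ ℤ^g`: the basis vector of the root vertex. -/
def e0 : List ℕ → ℤ := fun p => if p = [] then 1 else 0

/-- The inclusion `ℤ^{g_i} → ℤ^g` corresponding to the `i`-th principal subtree. -/
def shift (i : ℕ) (f : List ℕ → ℤ) : List ℕ → ℤ := fun p =>
  match p with
  | [] => 0
  | j :: q => if j = i then f q else 0

def isNodeB : CTree α → Bool
  | leaf _ => false
  | node _ => true

/-- The recursively defined set `G(Γ) ⊆ ℤ^g`: `G(Γ)` consists of all vectors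
`e_{v₀} + ∑_{i ∈ J} (w_i - e_{v₀})` where `J` ranges over subsets of the set of indices
of non-trivial principal subtrees and `w_i ∈ G(Γ_i)` (in particular if `g = 1` this is
just `{e_{v₀}}`). -/
def Gset : CTree α → Set (List ℕ → ℤ)
  | leaf _ => ∅
  | node ts =>
      {v | ∃ (J : Finset (Fin ts.length)) (w : Fin ts.length → (List ℕ → ℤ)),
        (∀ i ∈ J, (ts.get i).isNodeB = true ∧ w i ∈ Gset (ts.get i)) ∧
        v = e0 + ∑ i ∈ J, (shift i.1 (w i) - e0)}
  termination_by t => sizeOf t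
  decreasing_by
    have h1 : ts.get i ∈ ts := List.get_mem ts i
    have h2 := List.sizeOf_lt_of_mem h1
    simp only [CTree.node.sizeOf_spec]
    omega

/-- Transport of a set of edges of `Γ` to the `i`-th principal subtree
(`Y ∩ E(Γ_i)`, rewritten in the coordinates of `Γ_i`). -/
def sect (i : ℕ) (Y : Finset (List ℕ)) : Finset (List ℕ) :=
  (Y.filter (fun p => p.head? = some i)).image List.tail

/-- The recursively defined vector `v_Y ∈ ℤ^g` attached to a (minimally complete) set
of edges `Y`: `v_Y = e_{v₀} + ∑_{i ∈ I} (v_{Y_i} - e_{v₀})` where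
`I = {i | d_i ∉ Y}` and `Y_i = Y ∩ E(Γ_i)` (if `g = 1` this is just `e_{v₀}`). -/
def vY : CTree α → Finset (List ℕ) → (List ℕ → ℤ)
  | leaf _, _ => 0
  | node ts, Y =>
      e0 + ∑ i ∈ Finset.univ.filter (fun i : Fin ts.length => [i.1] ∉ Y),
        (shift i.1 (vY (ts.get i) (sect i.1 Y)) - e0)
  termination_by t => sizeOf t
  decreasing_by
    have h1 : ts.get i ∈ ts := List.get_mem ts i
    have h2 := List.sizeOf_lt_of_mem h1
    simp only [CTree.node.sizeOf_spec]
    omega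

/-- The set of balanced labellings `X(Γ) ⊆ ℂ^{E(Γ)}`. -/
def Xbal (t : CTree α) : Set (List ℕ → ℂ) :=
  {x | ∀ v ∈ uncS t, ∀ c ∈ colS t, ∀ c' ∈ colS t, v <+: c → v <+: c' →
    ((pathEdges t v c).map x).prod = ((pathEdges t v c').map x).prod}

/-- `Y ⊆ E(Γ)` is complete: for every finite multiset `A` of edges, the monomial
`∏_{d ∈ A} x_d` vanishes identically on `{x ∈ X(Γ) | x_y = 0 ∀ y ∈ Y}` if and only if
`A` contains at least one edge belonging to `Y`. -/
def CompleteSet (t : CTree α) (Y : Finset (List ℕ)) : Prop :=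
  ∀ A : Multiset (List ℕ), (∀ d ∈ A, d ∈ edgeS t) →
    ((∀ x ∈ Xbal t, (∀ y ∈ Y, x y = 0) → (A.map x).prod = 0) ↔ ∃ d ∈ A, d ∈ Y)

/-- A partition of a type `I`: a finite collection of nonempty pairwise disjoint
subsets covering `I`. -/
def IsPart {I : Type} (P : Finset (Finset I)) : Prop :=
  (∀ S ∈ P, S ≠ ∅) ∧ ∀ a : I, ∃! S, S ∈ P ∧ a ∈ S

/-- The tree with a single uncolored vertex whose children are the colored vertices
labelled by the elements of `S`. -/
def blockTree {I : Type} (S : Finset I) : CTree I := node (S.toList.map leaf)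

/-- The colored tree `Γ_P` of a partition `P`: the root has one child for each block
`S ∈ P`, an uncolored vertex whose children are colored vertices labelled by the
elements of `S`. -/
def gammaP {I : Type} (P : Finset (Finset I)) : CTree I := node (P.toList.map blockTree)

/-- A tree homomorphism `t → t'`, described by a map `f` on vertex positions: it sends
root to root, vertices to vertices, the two endpoints of any edge to the two endpoints
of an edge, and restricts to a label-preserving bijection between the colored
vertices. -/
def TreeHom {I : Type} (t t' : CTree I) (f : List ℕ → List ℕ) : Prop :=
  f [] = [] ∧
  (∀ p ∈ vertS t, f p ∈ vertS t') ∧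
  (∀ p ∈ vertS t, p ≠ [] →
    (f p ≠ [] ∧ (f p).dropLast = f p.dropLast) ∨
    (f p.dropLast ≠ [] ∧ (f p.dropLast).dropLast = f p)) ∧
  (∀ p a, t.sub p = some (leaf a) → t'.sub (f p) = some (leaf a)) ∧
  Set.BijOn f {p | ∃ a, t.sub p = some (leaf a)} {q | ∃ a, t'.sub q = some (leaf a)}

/-- A partition `P` of the label set is compatible with the colored tree `t` if there
exists a tree homomorphism `t → Γ_P`. -/
def Compatible {I : Type} (t : CTree I) (P : Finset (Finset I)) : Prop :=
  ∃ f, TreeHom t (gammaP P) f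

/-- `C_y ⊆ I` : the labels of the colored vertices whose path from the root contains
the edge `y`. -/
def Cy {I : Type} [Fintype I] [DecidableEq I] (t : CTree I) (y : List ℕ) : Finset I :=
  Finset.univ.filter (fun a => ∃ p, t.sub p = some (leaf a) ∧ y <+: p)


variable {α : Type}

lemma one_le_sizeOf (s : CTree α) : 1 ≤ sizeOf s := by
  cases s <;> simp <;> omega

lemma length_lt_sizeOf (ts : List (CTree α)) : ts.length < sizeOf ts := by
  induction ts with
  | nil => simp
  | cons a l ih => have := one_le_sizeOf a; simp at *; omega

lemma sub_append (t : CTree α) (p q : List ℕ) :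
    sub t (p ++ q) = (sub t p).bind (fun s => sub s q) := by
  induction p generalizing t with
  | nil => simp [sub]
  | cons i p ih =>
    cases t with
    | leaf a => simp [sub]
    | node ts =>
      simp only [List.cons_append, sub]
      cases h : ts[i]? <;> simp [ih]

lemma mem_allLists {m k : ℕ} {p : List ℕ} :
    p ∈ allLists m k ↔ p.length ≤ k ∧ ∀ i ∈ p, i < m := by
  induction k generalizing p with
  | zero =>
    simp only [allLists, List.mem_singleton]
    constructor
    · rintro rfl; simp
    · rintro ⟨h1, _⟩; exact List.length_eq_zero_iff.mp (Nat.le_zero.mp h1)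
  | succ k ih =>
    simp only [allLists, List.mem_cons, List.mem_flatMap, List.mem_range, List.mem_map]
    constructor
    · rintro (rfl | ⟨i, hi, q, hq, rfl⟩)
      · simp
      · obtain ⟨h1, h2⟩ := ih.mp hq
        refine ⟨by simpa using h1, ?_⟩
        intro j hj
        rcases List.mem_cons.mp hj with rfl | hj
        · exact hi
        · exact h2 j hj
    · rintro ⟨h1, h2⟩
      cases p with
      | nil => exact Or.inl rfl
      | cons i q =>
        refine Or.inr ⟨i, h2 i (by simp), q, ih.mpr ⟨by simpa using h1, fun j hj => h2 j (by simp [hj])⟩, rfl⟩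

lemma sub_bound : ∀ (p : List ℕ) (t s : CTree α), sub t p = some s →
    p.length + sizeOf s ≤ sizeOf t ∧ ∀ i ∈ p, i < sizeOf t := by
  intro p
  induction p with
  | nil =>
    intro t s h
    simp [sub] at h
    subst h
    simp
  | cons i q ih =>
    intro t s h
    cases t with
    | leaf a => simp [sub] at h
    | node ts =>
      simp only [sub] at h
      cases hg : ts[i]? with
      | none => rw [hg] at h; simp at h
      | some c =>
        rw [hg] at h
        have hc : c ∈ ts := by { obtain ⟨hlt, rfl⟩ := List.getElem?_eq_some_iff.mp hg; exact List.getElem_mem hlt }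
        have hsz : sizeOf c < sizeOf (node ts) := by
          have := List.sizeOf_lt_of_mem hc
          simp only [CTree.node.sizeOf_spec]; omega
        have hi : i < ts.length := (List.getElem?_eq_some_iff.mp hg).1
        have hlen : ts.length < sizeOf ts := length_lt_sizeOf ts
        obtain ⟨h1, h2⟩ := ih c s h
        constructor
        · simp only [List.length_cons, CTree.node.sizeOf_spec] at *
          omega
        · intro j hj
          rcases List.mem_cons.mp hj with rfl | hj
          · simp only [CTree.node.sizeOf_spec]; omega
          · exact lt_trans (h2 j hj) hsz

lemma mem_vertS {t : CTree α} {p : List ℕ} : p ∈ vertS t ↔ (t.sub p).isSome := by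
  simp only [vertS, Finset.mem_filter, List.mem_toFinset, and_iff_right_iff_imp]
  intro h
  obtain ⟨s, hs⟩ := Option.isSome_iff_exists.mp h
  obtain ⟨h1, h2⟩ := sub_bound p t s hs
  have := one_le_sizeOf s
  exact mem_allLists.mpr ⟨by omega, h2⟩

lemma mem_uncS {t : CTree α} {p : List ℕ} : p ∈ uncS t ↔ ∃ ts, t.sub p = some (node ts) := by
  simp only [uncS, Finset.mem_filter, List.mem_toFinset, and_iff_right_iff_imp]
  rintro ⟨ts, hs⟩
  obtain ⟨h1, h2⟩ := sub_bound p t _ hs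
  have := one_le_sizeOf (node ts : CTree α)
  exact mem_allLists.mpr ⟨by omega, h2⟩

lemma mem_colS {t : CTree α} {p : List ℕ} : p ∈ colS t ↔ ∃ a, t.sub p = some (leaf a) := by
  simp only [colS, Finset.mem_filter, List.mem_toFinset, and_iff_right_iff_imp]
  rintro ⟨a, hs⟩
  obtain ⟨h1, h2⟩ := sub_bound p t _ hs
  have := one_le_sizeOf (leaf a : CTree α)
  exact mem_allLists.mpr ⟨by omega, h2⟩

lemma mem_edgeS {t : CTree α} {p : List ℕ} : p ∈ edgeS t ↔ p ≠ [] ∧ (t.sub p).isSome := by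
  simp [edgeS, Finset.mem_erase, mem_vertS]

lemma uncS_subset_vertS {t : CTree α} {p : List ℕ} (h : p ∈ uncS t) : p ∈ vertS t := by
  obtain ⟨ts, hs⟩ := mem_uncS.mp h
  exact mem_vertS.mpr (by simp [hs])

lemma colS_subset_vertS {t : CTree α} {p : List ℕ} (h : p ∈ colS t) : p ∈ vertS t := by
  obtain ⟨a, hs⟩ := mem_colS.mp h
  exact mem_vertS.mpr (by simp [hs])

lemma vertS_of_prefix {t : CTree α} {p q : List ℕ} (h : p ∈ vertS t) (hq : q <+: p) :
    q ∈ vertS t := by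
  obtain ⟨r, rfl⟩ := hq
  rw [mem_vertS] at *
  rw [sub_append] at h
  cases hs : sub t q with
  | none => rw [hs] at h; simp at h
  | some c => simp

lemma parent_uncS {t : CTree α} {p : List ℕ} (h : p ∈ vertS t) (hne : p ≠ []) :
    p.dropLast ∈ uncS t := by
  have hsplit : p.dropLast ++ [p.getLast hne] = p := List.dropLast_append_getLast hne
  rw [mem_vertS, ← hsplit, sub_append] at h
  cases hs : sub t p.dropLast with
  | none => rw [hs] at h; simp at h
  | some c =>
    rw [hs] at h
    cases c with
    | leaf a => simp [sub] at h
    | node ts => exact mem_uncS.mpr ⟨ts, hs⟩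

lemma not_unc_of_colored_prefix {t : CTree α} {c u : List ℕ} (hc : c ∈ colS t)
    (hu : u ∈ uncS t) (hpre : c <+: u) : False := by
  obtain ⟨a, ha⟩ := mem_colS.mp hc
  obtain ⟨ts, hts⟩ := mem_uncS.mp hu
  obtain ⟨r, rfl⟩ := hpre
  rw [sub_append, ha] at hts
  cases r with
  | nil => simp [sub] at hts
  | cons i r => simp [sub] at hts


lemma prefix_dropLast_iff {p v : List ℕ} (hv : v ≠ []) :
    p <+: v ↔ p <+: v.dropLast ∨ p = v := by
  constructor
  · intro h
    by_cases hlen : p.length ≤ v.dropLast.length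
    · exact Or.inl (List.prefix_of_prefix_length_le h (List.dropLast_prefix v) hlen)
    · right
      have h1 := h.length_le
      have h2 : v.dropLast.length = v.length - 1 := List.length_dropLast
      have h3 : 1 ≤ v.length := List.length_pos_iff.mpr hv
      exact h.eq_of_length (by omega)
  · rintro (h | rfl)
    · exact h.trans (List.dropLast_prefix v)
    · exact List.prefix_refl _

lemma length_dropLast_add_one {p : List ℕ} (hp : p ≠ []) :
    p.dropLast.length + 1 = p.length := by
  have h2 : p.dropLast.length = p.length - 1 := List.length_dropLast
  have h3 : 1 ≤ p.length := List.length_pos_iff.mpr hp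
  omega

/-- If `v` is uncolored with uncolored parent, the difference of evaluations of `w_d`. -/
lemma wt_apply_sub (t : CTree α) {d v : List ℕ} (hd : d ≠ []) (hv : v ≠ [])
    (hvu : v ∈ uncS t) (hvdu : v.dropLast ∈ uncS t) :
    wt t d v - wt t d v.dropLast =
      (if d.dropLast = v then (1 : ℤ) else 0) - (if d = v then 1 else 0) := by
  have hld := length_dropLast_add_one hd
  have hlv := length_dropLast_add_one hv
  simp only [wt, hvu, hvdu, true_and]
  by_cases h1 : d = v
  · subst h1
    have c1 : ¬(d.dropLast <+: d ∧ ¬d <+: d) := by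
      rintro ⟨-, h⟩; exact h (List.prefix_refl d)
    have c2 : d.dropLast <+: d.dropLast ∧ ¬d <+: d.dropLast := by
      refine ⟨List.prefix_refl _, fun h => ?_⟩
      have := h.length_le; omega
    have c3 : ¬ d.dropLast = d := by
      intro h; rw [h] at hld; omega
    rw [if_neg c1, if_pos c2, if_neg c3, if_pos rfl]
  · by_cases h2 : d.dropLast = v
    · have hl2 : d.dropLast.length = v.length := by rw [h2]
      have c1 : d.dropLast <+: v ∧ ¬d <+: v := by
        refine ⟨h2 ▸ List.prefix_refl _, fun h => ?_⟩
        have := h.length_le; omega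
      have c2 : ¬(d.dropLast <+: v.dropLast ∧ ¬d <+: v.dropLast) := by
        rintro ⟨h, -⟩
        have := h.length_le; omega
      rw [if_pos c1, if_neg c2, if_pos h2, if_neg h1]
    · have key : ∀ q : List ℕ, q ≠ v → (q <+: v ↔ q <+: v.dropLast) := by
        intro q hq
        rw [prefix_dropLast_iff hv]
        simp [hq]
      simp only [key _ h2, key _ h1, if_neg h2, if_neg h1, sub_self]

/-- Number of edges of `S` whose parent is `v`. -/
def degE (S : Multiset (List ℕ)) (v : List ℕ) : ℕ :=
  (S.filter (fun d => d.dropLast = v ∧ d ≠ [])).card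

lemma sum_map_apply (S : Multiset (List ℕ)) (f : List ℕ → List ℕ → ℤ) (u : List ℕ) :
    (S.map f).sum u = (S.map (fun d => f d u)).sum := by
  induction S using Multiset.induction with
  | empty => simp
  | cons d S ih => simp [ih]

lemma key_count (t : CTree α) (S : Multiset (List ℕ)) (hS : ∀ d ∈ S, d ∈ edgeS t)
    {v : List ℕ} (hv : v ∈ uncS t) (hne : v ≠ []) (hdl : v.dropLast ∈ uncS t) :
    (S.map (fun d => wt t d v)).sum - (S.map (fun d => wt t d v.dropLast)).sum =
      (degE S v : ℤ) - S.count v := by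
  induction S using Multiset.induction with
  | empty => simp [degE]
  | cons d S ih =>
    have hd : d ≠ [] := (mem_edgeS.mp (hS d (Multiset.mem_cons_self d S))).1
    have hS' : ∀ d ∈ S, d ∈ edgeS t := fun d hd => hS d (Multiset.mem_cons_of_mem hd)
    have hw := wt_apply_sub t hd hne hv hdl
    have hcnt : ((d ::ₘ S).count v : ℤ) = S.count v + (if d = v then 1 else 0) := by
      rw [Multiset.count_cons]
      push_cast
      by_cases h : v = d <;> simp [h, eq_comm]
    have hdeg : (degE (d ::ₘ S) v : ℤ) = degE S v + (if d.dropLast = v then 1 else 0) := by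
      simp only [degE, Multiset.filter_cons]
      by_cases h : d.dropLast = v ∧ d ≠ []
      · rw [if_pos h, if_pos h.1]
        push_cast [Multiset.card_add, Multiset.card_singleton]
        ring
      · rw [if_neg h, if_neg (by tauto)]
        simp
    simp only [Multiset.map_cons, Multiset.sum_cons]
    rw [hcnt, hdeg]
    have := ih hS'
    linarith [hw, this]

lemma key_count_root (t : CTree α) (S : Multiset (List ℕ)) (hS : ∀ d ∈ S, d ∈ edgeS t)
    (h0 : ([] : List ℕ) ∈ uncS t) :
    (S.map (fun d => wt t d [])).sum = (degE S [] : ℤ) := by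
  induction S using Multiset.induction with
  | empty => simp [degE]
  | cons d S ih =>
    have hd : d ≠ [] := (mem_edgeS.mp (hS d (Multiset.mem_cons_self d S))).1
    have hS' : ∀ d ∈ S, d ∈ edgeS t := fun d hd => hS d (Multiset.mem_cons_of_mem hd)
    have hw : wt t d [] = if d.dropLast = [] then (1 : ℤ) else 0 := by
      simp only [wt, h0, true_and]
      by_cases h : d.dropLast = []
      · rw [if_pos, if_pos h]
        refine ⟨by simp [h], ?_⟩
        intro hc
        exact hd (List.prefix_nil.mp hc)
      · rw [if_neg, if_neg h]
        rintro ⟨hc, -⟩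
        exact h (List.prefix_nil.mp hc)
    have hdeg : (degE (d ::ₘ S) [] : ℤ) = degE S [] + (if d.dropLast = [] then 1 else 0) := by
      simp only [degE, Multiset.filter_cons]
      by_cases h : d.dropLast = []
      · rw [if_pos ⟨h, hd⟩, if_pos h]
        push_cast [Multiset.card_add, Multiset.card_singleton]
        ring
      · rw [if_neg (by tauto), if_neg h]
        simp
    simp only [Multiset.map_cons, Multiset.sum_cons]
    rw [hdeg, hw, ih hS']
    ring

lemma wt_eq_sv_sub (t : CTree α) (c : List ℕ) :
    wt t c = sv t c.dropLast - sv t c := by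
  funext u
  simp only [wt, sv, Pi.sub_apply]
  by_cases h1 : u ∈ uncS t
  · by_cases h2 : c <+: u
    · rw [if_neg, if_pos ⟨h1, (List.dropLast_prefix c).trans h2⟩, if_pos ⟨h1, h2⟩]
      · ring
      · rintro ⟨-, -, h⟩; exact h h2
    · by_cases h3 : c.dropLast <+: u
      · rw [if_pos ⟨h1, h3, h2⟩, if_pos ⟨h1, h3⟩, if_neg (fun h => h2 h.2)]
        ring
      · rw [if_neg (fun h => h3 h.2.1), if_neg (fun h => h3 h.2), if_neg (fun h => h2 h.2)]
        ring
  · rw [if_neg (fun h => h1 h.1), if_neg (fun h => h1 h.1), if_neg (fun h => h1 h.1)]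
    ring

lemma sv_colored {t : CTree α} {c : List ℕ} (hc : c ∈ colS t) : sv t c = 0 := by
  funext u
  simp only [sv, Pi.zero_apply]
  rw [if_neg]
  rintro ⟨h1, h2⟩
  exact not_unc_of_colored_prefix hc h1 h2

lemma pathEdges_self (t : CTree α) (v : List ℕ) : pathEdges t v v = 0 := by
  have h : (edgeS t).filter (fun d => v <+: d ∧ d ≠ v ∧ d <+: v) = ∅ := by
    rw [Finset.filter_eq_empty_iff]
    rintro d hd ⟨h1, h2, h3⟩
    exact h2 (h1.eq_of_length (le_antisymm h1.length_le h3.length_le)).symm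
  simp [pathEdges, h]

lemma pathEdges_snoc {t : CTree α} {v c : List ℕ} (hc : c ∈ vertS t) (hne : c ≠ [])
    (hv : v <+: c) (hvc : v ≠ c) :
    pathEdges t v c = c ::ₘ pathEdges t v c.dropLast := by
  simp only [pathEdges]
  have hstep : (edgeS t).filter (fun d => v <+: d ∧ d ≠ v ∧ d <+: c) =
      insert c ((edgeS t).filter (fun d => v <+: d ∧ d ≠ v ∧ d <+: c.dropLast)) := by
    ext d
    simp only [Finset.mem_filter, Finset.mem_insert]
    constructor
    · rintro ⟨hd, h1, h2, h3⟩
      rcases (prefix_dropLast_iff hne).mp h3 with h | rfl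
      · exact Or.inr ⟨hd, h1, h2, h⟩
      · exact Or.inl rfl
    · rintro (rfl | ⟨hd, h1, h2, h3⟩)
      · exact ⟨mem_edgeS.mpr ⟨hne, mem_vertS.mp hc⟩, hv, Ne.symm hvc, List.prefix_refl _⟩
      · exact ⟨hd, h1, h2, h3.trans (List.dropLast_prefix c)⟩
  rw [hstep, Finset.insert_val_of_notMem]
  simp only [Finset.mem_filter, not_and]
  intro _ _ _ h
  have h1 := h.length_le
  have := length_dropLast_add_one hne
  omega

lemma pathSum_aux (t : CTree α) : ∀ (n : ℕ) (c : List ℕ), c.length ≤ n → c ∈ vertS t →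
    ∀ v, v <+: c → ((pathEdges t v c).map (wt t)).sum = sv t v - sv t c := by
  intro n
  induction n with
  | zero =>
    intro c hlen hc v hv
    have : c = [] := List.length_eq_zero_iff.mp (Nat.le_zero.mp hlen)
    subst this
    obtain rfl := List.prefix_nil.mp hv
    rw [pathEdges_self]
    simp
  | succ n ih =>
    intro c hlen hc v hv
    by_cases hvc : v = c
    · subst hvc
      rw [pathEdges_self]
      simp
    · have hne : c ≠ [] := by
        rintro rfl
        exact hvc (List.prefix_nil.mp hv)
      have hlc := length_dropLast_add_one hne
      have hv' : v <+: c.dropLast := by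
        rcases (prefix_dropLast_iff hne).mp hv with h | h
        · exact h
        · exact absurd h hvc
      have hc' : c.dropLast ∈ vertS t := vertS_of_prefix hc (List.dropLast_prefix c)
      rw [pathEdges_snoc hc hne hv hvc]
      simp only [Multiset.map_cons, Multiset.sum_cons]
      rw [ih c.dropLast (by omega) hc' v hv', wt_eq_sv_sub]
      abel

lemma pathSum (t : CTree α) {c : List ℕ} (hc : c ∈ vertS t) {v : List ℕ} (hv : v <+: c) :
    ((pathEdges t v c).map (wt t)).sum = sv t v - sv t c :=
  pathSum_aux t c.length c le_rfl hc v hv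

lemma simSum {t : CTree α} {P Q : Multiset (List ℕ)} (h : Sim t P Q) :
    (P.map (wt t)).sum = (Q.map (wt t)).sum := by
  obtain ⟨v, hv, c₁, hc₁, c₂, hc₂, hp₁, hp₂, rfl, rfl⟩ := h
  rw [pathSum t (colS_subset_vertS hc₁) hp₁, pathSum t (colS_subset_vertS hc₂) hp₂,
    sv_colored hc₁, sv_colored hc₂]

lemma degE_pos_iff {S : Multiset (List ℕ)} {v : List ℕ} :
    1 ≤ degE S v ↔ ∃ e ∈ S, e.dropLast = v ∧ e ≠ [] := by
  constructor
  · intro h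
    obtain ⟨e, he⟩ := Multiset.card_pos_iff_exists_mem.mp h
    obtain ⟨h1, h2, h3⟩ := Multiset.mem_filter.mp he
    exact ⟨e, h1, h2, h3⟩
  · rintro ⟨e, h1, h2, h3⟩
    exact Multiset.card_pos_iff_exists_mem.mpr ⟨e, Multiset.mem_filter.mpr ⟨h1, h2, h3⟩⟩

lemma cons_of_sum (t : CTree α) {A B : Multiset (List ℕ)}
    (hA : ∀ d ∈ A, d ∈ edgeS t) (hB : ∀ d ∈ B, d ∈ edgeS t)
    (hsum : (A.map (wt t)).sum = (B.map (wt t)).sum) :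
    ∀ v ∈ uncS t, v ≠ [] →
      (degE A v : ℤ) - A.count v = (degE B v : ℤ) - B.count v := by
  intro v hv hne
  have hdl := parent_uncS (uncS_subset_vertS hv) hne
  have h1 := key_count t A hA hv hne hdl
  have h2 := key_count t B hB hv hne hdl
  have e1 : (A.map (fun d => wt t d v)).sum = (B.map (fun d => wt t d v)).sum := by
    rw [← sum_map_apply, ← sum_map_apply, hsum]
  have e2 : (A.map (fun d => wt t d v.dropLast)).sum =
      (B.map (fun d => wt t d v.dropLast)).sum := by
    rw [← sum_map_apply, ← sum_map_apply, hsum]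
  linarith

lemma root_uncS (t : CTree α) (ht : IsColoredTree t) : ([] : List ℕ) ∈ uncS t := by
  obtain ⟨ts, rfl⟩ := ht.2
  exact mem_uncS.mpr ⟨ts, rfl⟩

lemma descend (t : CTree α) (A B : Multiset (List ℕ)) (hA : ∀ d ∈ A, d ∈ edgeS t)
    (hdisj : Disjoint A B)
    (hcons : ∀ v ∈ uncS t, v ≠ [] →
      (degE A v : ℤ) - A.count v = (degE B v : ℤ) - B.count v) :
    ∀ (n : ℕ) (x : List ℕ), x ∈ uncS t → 1 ≤ degE A x → sizeOf t - x.length ≤ n →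
    ∃ c ∈ colS t, x <+: c ∧ x ≠ c ∧ ∀ d, x <+: d → d ≠ x → d <+: c → d ∈ A := by
  intro n
  induction n with
  | zero =>
    intro x hx hdeg hn
    exfalso
    obtain ⟨e, heA, hedl, hene⟩ := degE_pos_iff.mp hdeg
    have he : e ∈ edgeS t := hA e heA
    obtain ⟨s, hs⟩ := Option.isSome_iff_exists.mp (mem_edgeS.mp he).2
    obtain ⟨hb, -⟩ := sub_bound e t s hs
    have := one_le_sizeOf s
    have hxlen : x.length + 1 = e.length := by
      rw [← hedl]; exact length_dropLast_add_one hene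
    omega
  | succ n ih =>
    intro x hx hdeg hn
    obtain ⟨e, heA, hedl, hene⟩ := degE_pos_iff.mp hdeg
    have he : e ∈ edgeS t := hA e heA
    have hes : (sub t e).isSome := (mem_edgeS.mp he).2
    have hxlen : x.length + 1 = e.length := by
      rw [← hedl]; exact length_dropLast_add_one hene
    have hxe : x <+: e := hedl ▸ List.dropLast_prefix e
    obtain ⟨s, hs⟩ := Option.isSome_iff_exists.mp hes
    cases s with
    | leaf a =>
      refine ⟨e, mem_colS.mpr ⟨a, hs⟩, hxe, ?_, ?_⟩
      · intro h
        rw [h] at hxlen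
        omega
      · intro d h1 h2 h3
        have l1 : x.length ≤ d.length := h1.length_le
        have l2 : d.length ≤ e.length := h3.length_le
        have l3 : x.length ≠ d.length := fun hh => h2 (h1.eq_of_length hh).symm
        have : d = e := h3.eq_of_length (by omega)
        exact this ▸ heA
    | node ts =>
      have heu : e ∈ uncS t := mem_uncS.mpr ⟨ts, hs⟩
      have hcountB : B.count e = 0 := Multiset.count_eq_zero.mpr (fun h => Multiset.disjoint_left.mp hdisj heA h)
      have hcountA : 1 ≤ A.count e := Multiset.one_le_count_iff_mem.mpr heA
      have hc := hcons e heu hene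
      have hcA' : (1 : ℤ) ≤ A.count e := by exact_mod_cast hcountA
      have hdegB : (0 : ℤ) ≤ (degE B e : ℤ) := Int.natCast_nonneg _
      have hdegA : 1 ≤ degE A e := by
        rw [hcountB] at hc
        have : (1 : ℤ) ≤ (degE A e : ℤ) := by omega
        exact_mod_cast this
      obtain ⟨c, hcc, hec, hecne, hpath⟩ := ih e heu hdegA (by omega)
      have hlec : e.length ≤ c.length := hec.length_le
      have hlec' : e.length ≠ c.length := fun hh => hecne (hec.eq_of_length hh)
      refine ⟨c, hcc, hxe.trans hec, ?_, ?_⟩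
      · intro h
        rw [← h] at hlec
        omega
      · intro d h1 h2 h3
        have l1 : x.length ≤ d.length := h1.length_le
        have l3 : x.length ≠ d.length := fun hh => h2 (h1.eq_of_length hh).symm
        by_cases hcase : d.length ≤ e.length
        · have hde : d <+: e := List.prefix_of_prefix_length_le h3 hec hcase
          have : d = e := hde.eq_of_length (by omega)
          exact this ▸ heA
        · have hed : e <+: d := List.prefix_of_prefix_length_le hec h3 (by omega)
          exact hpath d hed (fun hh => by rw [hh] at hcase; omega) h3

lemma rev_aux (t : CTree α) :
    ∀ (l : List (Multiset (List ℕ) × Multiset (List ℕ))), (∀ pr ∈ l, Sim t pr.1 pr.2) →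
    (((l.map Prod.fst).sum).map (wt t)).sum = (((l.map Prod.snd).sum).map (wt t)).sum := by
  intro l
  induction l with
  | nil => intro _; simp
  | cons pr l ih =>
    intro h
    simp only [List.map_cons, List.sum_cons, Multiset.map_add, Multiset.sum_add]
    rw [simSum (h pr List.mem_cons_self), ih (fun q hq => h q (List.mem_cons_of_mem _ hq))]

lemma forward_aux (t : CTree α) (ht : IsColoredTree t) :
    ∀ (n : ℕ) (A B : Multiset (List ℕ)), Multiset.card A + Multiset.card B ≤ n →
    (∀ d ∈ A, d ∈ edgeS t) → (∀ d ∈ B, d ∈ edgeS t) → Disjoint A B →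
    (A.map (wt t)).sum = (B.map (wt t)).sum →
    ∃ l : List (Multiset (List ℕ) × Multiset (List ℕ)),
      A = (l.map Prod.fst).sum ∧ B = (l.map Prod.snd).sum ∧ ∀ pr ∈ l, Sim t pr.1 pr.2 := by
  intro n
  induction n with
  | zero =>
    intro A B hcard hA hB hdisj hsum
    have hA0 : A = 0 := Multiset.card_eq_zero.mp (by omega)
    have hB0 : B = 0 := Multiset.card_eq_zero.mp (by omega)
    exact ⟨[], by simp [hA0, hB0]⟩
  | succ n ih =>
    intro A B hcard hA hB hdisj hsum
    -- if one side is empty, so is the other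
    have hzero : ∀ (C D : Multiset (List ℕ)), (∀ d ∈ D, d ∈ edgeS t) → C = 0 →
        (C.map (wt t)).sum = (D.map (wt t)).sum → D = 0 := by
      intro C D hD hC0 hs
      by_contra hD0
      obtain ⟨e, he⟩ := Multiset.exists_mem_of_ne_zero hD0
      have heE := hD e he
      have hene := (mem_edgeS.mp heE).1
      have hu : e.dropLast ∈ uncS t :=
        parent_uncS (mem_vertS.mpr (mem_edgeS.mp heE).2) hene
      have hval : wt t e e.dropLast = 1 := by
        simp only [wt]
        rw [if_pos]
        refine ⟨hu, List.prefix_refl _, fun h => ?_⟩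
        have := h.length_le
        have := length_dropLast_add_one hene
        omega
      have hmem : wt t e e.dropLast ∈ D.map (fun d => wt t d e.dropLast) := by
        have := Multiset.mem_map_of_mem (fun d => wt t d e.dropLast) he
        exact this
      have hnn : ∀ x ∈ D.map (fun d => wt t d e.dropLast), (0 : ℤ) ≤ x := by
        intro x hx
        obtain ⟨d, -, rfl⟩ := Multiset.mem_map.mp hx
        simp only [wt]
        split <;> omega
      have h1 : (1 : ℤ) ≤ (D.map (fun d => wt t d e.dropLast)).sum := by
        calc (1 : ℤ) = wt t e e.dropLast := hval.symm
        _ ≤ _ := Multiset.single_le_sum hnn _ hmem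
      have h0 : (D.map (fun d => wt t d e.dropLast)).sum = 0 := by
        rw [← sum_map_apply, ← hs, hC0]
        simp
      omega
    by_cases hA0 : A = 0
    · have hB0 : B = 0 := hzero A B hB hA0 hsum
      exact ⟨[], by simp [hA0, hB0]⟩
    by_cases hB0 : B = 0
    · exact absurd (hzero B A hA hB0 hsum.symm) hA0
    -- main case
    have hcons := cons_of_sum t hA hB hsum
    have hconsS : ∀ v ∈ uncS t, v ≠ [] →
        (degE B v : ℤ) - B.count v = (degE A v : ℤ) - A.count v :=
      fun v hv hne => (hcons v hv hne).symm
    have hdisjS : Disjoint B A := hdisj.symm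
    -- minimal-length element of A + B
    have hne : (A + B).toFinset.Nonempty := by
      obtain ⟨e, he⟩ := Multiset.exists_mem_of_ne_zero hA0
      exact ⟨e, Multiset.mem_toFinset.mpr (Multiset.mem_add.mpr (Or.inl he))⟩
    obtain ⟨e₀, he₀, hmin⟩ := Finset.exists_min_image _ (fun d => d.length) hne
    rw [Multiset.mem_toFinset] at he₀
    have he₀E : e₀ ∈ edgeS t := by
      rcases Multiset.mem_add.mp he₀ with h | h
      exacts [hA _ h, hB _ h]
    have he₀ne := (mem_edgeS.mp he₀E).1
    set v := e₀.dropLast with hvdef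
    have hv : v ∈ uncS t := parent_uncS (mem_vertS.mpr (mem_edgeS.mp he₀E).2) he₀ne
    have hlen : v.length + 1 = e₀.length := length_dropLast_add_one he₀ne
    have hminlen : ∀ d ∈ A + B, v.length < d.length := by
      intro d hd
      have := hmin d (Multiset.mem_toFinset.mpr hd)
      have h2 := hmin e₀ (Multiset.mem_toFinset.mpr he₀)
      omega
    have hrootdeg : (degE A ([] : List ℕ) : ℤ) = degE B [] := by
      have h0 : ([] : List ℕ) ∈ uncS t := root_uncS t ht
      have e1 : (A.map (fun d => wt t d [])).sum = (B.map (fun d => wt t d [])).sum := by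
        rw [← sum_map_apply, ← sum_map_apply, hsum]
      rw [← key_count_root t A hA h0, ← key_count_root t B hB h0]
      exact e1
    have hnonroot : v ≠ [] → (degE A v : ℤ) = degE B v := by
      intro hroot
      have hc := hcons v hv hroot
      have hAc : A.count v = 0 := Multiset.count_eq_zero.mpr
        (fun hvA => absurd (hminlen v (Multiset.mem_add.mpr (Or.inl hvA))) (lt_irrefl _))
      have hBc : B.count v = 0 := Multiset.count_eq_zero.mpr
        (fun hvB => absurd (hminlen v (Multiset.mem_add.mpr (Or.inr hvB))) (lt_irrefl _))
      rw [hAc, hBc] at hc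
      omega
    have hdeg : 1 ≤ degE A v ∧ 1 ≤ degE B v := by
      rcases Multiset.mem_add.mp he₀ with hm | hm
      · have hdA : 1 ≤ degE A v := degE_pos_iff.mpr ⟨e₀, hm, hvdef.symm, he₀ne⟩
        refine ⟨hdA, ?_⟩
        by_cases hroot : v = []
        · rw [hroot] at hdA ⊢
          have : (1 : ℤ) ≤ degE B [] := by
            rw [← hrootdeg]; exact_mod_cast hdA
          exact_mod_cast this
        · have := hnonroot hroot
          have : (1 : ℤ) ≤ degE B v := by
            rw [← this]; exact_mod_cast hdA
          exact_mod_cast this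
      · have hdB : 1 ≤ degE B v := degE_pos_iff.mpr ⟨e₀, hm, hvdef.symm, he₀ne⟩
        refine ⟨?_, hdB⟩
        by_cases hroot : v = []
        · rw [hroot] at hdB ⊢
          have : (1 : ℤ) ≤ degE A [] := by
            rw [hrootdeg]; exact_mod_cast hdB
          exact_mod_cast this
        · have := hnonroot hroot
          have : (1 : ℤ) ≤ degE A v := by
            rw [this]; exact_mod_cast hdB
          exact_mod_cast this
    obtain ⟨c₁, hc₁, hvc₁, hvne₁, hpath₁⟩ :=
      descend t A B hA hdisj hcons (sizeOf t) v hv hdeg.1 (by omega)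
    obtain ⟨c₂, hc₂, hvc₂, hvne₂, hpath₂⟩ :=
      descend t B A hB hdisjS hconsS (sizeOf t) v hv hdeg.2 (by omega)
    set P₁ := pathEdges t v c₁ with hP₁def
    set P₂ := pathEdges t v c₂ with hP₂def
    have hP₁sub : P₁ ≤ A := by
      rw [hP₁def, pathEdges, Multiset.le_iff_subset (Finset.nodup _)]
      intro d hd
      obtain ⟨-, h1, h2, h3⟩ := Finset.mem_filter.mp (Finset.mem_def.mpr hd)
      exact hpath₁ d h1 h2 h3
    have hP₂sub : P₂ ≤ B := by
      rw [hP₂def, pathEdges, Multiset.le_iff_subset (Finset.nodup _)]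
      intro d hd
      obtain ⟨-, h1, h2, h3⟩ := Finset.mem_filter.mp (Finset.mem_def.mpr hd)
      exact hpath₂ d h1 h2 h3
    have hSim : Sim t P₁ P₂ :=
      ⟨v, uncS_subset_vertS hv, c₁, hc₁, c₂, hc₂, hvc₁, hvc₂, rfl, rfl⟩
    -- P₁ is nonempty
    have hlenc : v.length < c₁.length := by
      have h1 := hvc₁.length_le
      have h2 : v.length ≠ c₁.length := fun hh => hvne₁ (hvc₁.eq_of_length hh)
      omega
    have hd₀ : c₁.take (v.length + 1) ∈ P₁ := by
      have htk : c₁.take (v.length + 1) <+: c₁ := List.take_prefix _ _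
      have hvtk : v <+: c₁.take (v.length + 1) := by
        have hv' : v = c₁.take v.length := List.prefix_iff_eq_take.mp hvc₁
        conv_lhs => rw [hv']
        exact List.take_prefix_take_left (by omega)
      have hlentk : (c₁.take (v.length + 1)).length = v.length + 1 := by
        simp [List.length_take]
        omega
      rw [hP₁def, pathEdges, ← Finset.mem_def]
      refine Finset.mem_filter.mpr ⟨?_, hvtk, ?_, htk⟩
      · refine mem_edgeS.mpr ⟨?_, mem_vertS.mp (vertS_of_prefix (colS_subset_vertS hc₁) htk)⟩
        intro hh
        rw [hh] at hlentk
        simp at hlentk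
      · intro hh
        rw [hh] at hlentk
        omega
    have hP₁pos : 0 < Multiset.card P₁ := Multiset.card_pos_iff_exists_mem.mpr ⟨_, hd₀⟩
    set A' := A - P₁ with hA'def
    set B' := B - P₂ with hB'def
    have hA'le : A' ≤ A := tsub_le_self
    have hB'le : B' ≤ B := tsub_le_self
    have hAsplit : A' + P₁ = A := tsub_add_cancel_of_le hP₁sub
    have hBsplit : B' + P₂ = B := tsub_add_cancel_of_le hP₂sub
    have hsum' : (A'.map (wt t)).sum = (B'.map (wt t)).sum := by
      have e1 : (A.map (wt t)).sum = (A'.map (wt t)).sum + (P₁.map (wt t)).sum := by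
        conv_lhs => rw [← hAsplit]
        rw [Multiset.map_add, Multiset.sum_add]
      have e2 : (B.map (wt t)).sum = (B'.map (wt t)).sum + (P₂.map (wt t)).sum := by
        conv_lhs => rw [← hBsplit]
        rw [Multiset.map_add, Multiset.sum_add]
      rw [e1, e2, simSum hSim] at hsum
      exact add_right_cancel hsum
    have hcard' : Multiset.card A' + Multiset.card B' ≤ n := by
      have c1 : Multiset.card A' + Multiset.card P₁ = Multiset.card A := by
        rw [← hAsplit, Multiset.card_add]
      have c2 : Multiset.card B' ≤ Multiset.card B := Multiset.card_le_card hB'le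
      omega
    obtain ⟨l, hl1, hl2, hl3⟩ := ih A' B' hcard'
      (fun d hd => hA d (Multiset.mem_of_le hA'le hd))
      (fun d hd => hB d (Multiset.mem_of_le hB'le hd))
      (Multiset.disjoint_left.mpr fun ha hb => Multiset.disjoint_left.mp hdisj (Multiset.mem_of_le hA'le ha) (Multiset.mem_of_le hB'le hb))
      hsum'
    refine ⟨(P₁, P₂) :: l, ?_, ?_, ?_⟩
    · rw [List.map_cons, List.sum_cons, ← hl1, add_comm]
      exact hAsplit.symm
    · rw [List.map_cons, List.sum_cons, ← hl2, add_comm]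
      exact hBsplit.symm
    · intro pr hpr
      rcases List.mem_cons.mp hpr with rfl | h
      · exact hSim
      · exact hl3 _ h

end CTree

open CTree in
/-- For disjoint finite multisets `A`, `B` of edges of a colored tree
`Γ`, `∑_{d ∈ A} w_d = ∑_{d ∈ B} w_d` (with multiplicity, in `M`) if and only if `A` and
`B` can be partitioned into multisets `A₁, …, A_r` and `B₁, …, B_r` with `A_l ∼ B_l`
for every `1 ≤ l ≤ r`. -/
theorem weight_sum_eq_iff_partition_into_sim_pairs
    {α : Type} (t : CTree α) (ht : t.IsColoredTree)
    (A B : Multiset (List ℕ)) (hA : ∀ d ∈ A, d ∈ edgeS t) (hB : ∀ d ∈ B, d ∈ edgeS t)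
    (hdisj : Disjoint A B) :
    (A.map (wt t)).sum = (B.map (wt t)).sum ↔
      ∃ l : List (Multiset (List ℕ) × Multiset (List ℕ)),
        A = (l.map Prod.fst).sum ∧ B = (l.map Prod.snd).sum ∧
          ∀ pr ∈ l, Sim t pr.1 pr.2 := by
  constructor
  · intro hsum
    exact forward_aux t ht (Multiset.card A + Multiset.card B) A B le_rfl hA hB hdisj hsum
  · rintro ⟨l, rfl, rfl, hsim⟩
    exact rev_aux t l hsim
end
end

section
/- Let Γ be a colored tree and let φ : ℂ[x_d : d ∈ E(Γ)] → ℂ[M] be the ℂ-algebra homomorphism from the polynomial ring on the edge variables to the group algebra of M sending x_d to t^{w_d}. Then the kernel of φ is the ideal generated by the binomials ∏_{d ∈ A} x_d − ∏_{d ∈ B} x_d, over all pairs of disjoint finite multisets A, B of edges with A ∼ B; consequently the quotient of ℂ[x_d : d ∈ E(Γ)] by this binomial ideal is isomorphic to the affine semigroup algebra ℂ[χ(Γ)], the ℂ-subalgebra of ℂ[M] generated by {t^{w_d} : d ∈ E(Γ)}. -/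
noncomputable section
open Classical

/-- The variables of the polynomial ring: one for each edge of `t`. -/
def EdgeVar {α : Type} (t : CTree α) : Type := {d : List ℕ // d ∈ CTree.edgeS t}

/-- The `ℂ`-algebra homomorphism `φ : ℂ[x_d : d ∈ E(Γ)] → ℂ[M]`, `x_d ↦ t^{w_d}`. -/
def toricHom {α : Type} (t : CTree α) :
    MvPolynomial (EdgeVar t) ℂ →ₐ[ℂ] AddMonoidAlgebra ℂ (List ℕ → ℤ) :=
  MvPolynomial.aeval (fun d => AddMonoidAlgebra.single (CTree.wt t d.1) (1 : ℂ))

/-- The ideal generated by the binomials `∏_{d ∈ A} x_d - ∏_{d ∈ B} x_d` over all pairs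
of disjoint finite multisets of edges with `A ∼ B`. -/
def simIdeal {α : Type} (t : CTree α) : Ideal (MvPolynomial (EdgeVar t) ℂ) :=
  Ideal.span {f | ∃ A B : Multiset (EdgeVar t),
    Disjoint A B ∧ CTree.Sim t (A.map Subtype.val) (B.map Subtype.val) ∧
    f = (A.map MvPolynomial.X).prod - (B.map MvPolynomial.X).prod}

namespace KT
open CTree

variable {α : Type}

theorem sub_append (t : CTree α) (p q : List ℕ) :
    t.sub (p ++ q) = (t.sub p).bind (fun s => s.sub q) := by
  induction p generalizing t with
  | nil => simp [CTree.sub]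
  | cons i p ih =>
    cases t with
    | leaf a => simp [CTree.sub]
    | node ts =>
      simp only [List.cons_append, CTree.sub]
      cases h : ts[i]? with
      | none => simp
      | some c => simp [ih]

theorem one_le_sizeOf (t : CTree α) : 1 ≤ sizeOf t := by
  cases t <;> simp <;> omega

theorem lt_sizeOf_node {c : CTree α} {ts : List (CTree α)} (h : c ∈ ts) :
    sizeOf c < sizeOf (CTree.node ts) := by
  have := List.sizeOf_lt_of_mem h
  simp only [CTree.node.sizeOf_spec]; omega

theorem length_lt_sizeOf (ts : List (CTree α)) : ts.length < sizeOf ts := by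
  induction ts with
  | nil => simp
  | cons a l ih => have := one_le_sizeOf a; simp_all; omega

theorem sub_sizeOf : ∀ (p : List ℕ) (t s : CTree α), t.sub p = some s →
    sizeOf s + p.length ≤ sizeOf t := by
  intro p
  induction p with
  | nil => intro t s h; simp [CTree.sub] at h; subst h; simp
  | cons i q ih =>
    intro t s h
    cases t with
    | leaf a => simp [CTree.sub] at h
    | node ts =>
      simp only [CTree.sub] at h
      cases hc : ts[i]? with
      | none => rw [hc] at h; simp at h
      | some c =>
        rw [hc] at h; simp at h
        have h1 := ih c s h
        have h2 := lt_sizeOf_node (List.mem_of_getElem? hc)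
        simp only [List.length_cons]; omega

theorem sub_entries : ∀ (p : List ℕ) (t s : CTree α), t.sub p = some s →
    ∀ i ∈ p, i < sizeOf t := by
  intro p
  induction p with
  | nil => intro t s h i hi; simp at hi
  | cons j q ih =>
    intro t s h i hi
    cases t with
    | leaf a => simp [CTree.sub] at h
    | node ts =>
      simp only [CTree.sub] at h
      cases hc : ts[j]? with
      | none => rw [hc] at h; simp at h
      | some c =>
        rw [hc] at h; simp at h
        have hlt : sizeOf c < sizeOf (CTree.node ts) := lt_sizeOf_node (List.mem_of_getElem? hc)
        rcases List.mem_cons.mp hi with rfl | hi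
        · have : i < ts.length := (List.getElem?_eq_some_iff.mp hc).1
          have := length_lt_sizeOf ts
          simp only [CTree.node.sizeOf_spec]; omega
        · exact lt_trans (ih c s h i hi) hlt

theorem mem_allLists {m : ℕ} : ∀ (k : ℕ) (p : List ℕ),
    p ∈ CTree.allLists m k ↔ p.length ≤ k ∧ ∀ i ∈ p, i < m := by
  intro k
  induction k with
  | zero =>
    intro p
    simp only [CTree.allLists, List.mem_singleton]
    constructor
    · rintro rfl; simp
    · rintro ⟨h, _⟩; exact List.length_eq_zero_iff.mp (Nat.le_zero.mp h)
  | succ k ih =>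
    intro p
    simp only [CTree.allLists, List.mem_cons, List.mem_flatMap, List.mem_map, List.mem_range]
    constructor
    · rintro (rfl | ⟨i, hi, q, hq, rfl⟩)
      · simp
      · obtain ⟨h1, h2⟩ := (ih q).mp hq
        refine ⟨by simpa using Nat.succ_le_succ h1, ?_⟩
        intro j hj
        rcases List.mem_cons.mp hj with rfl | hj
        · exact hi
        · exact h2 j hj
    · rintro ⟨h1, h2⟩
      cases p with
      | nil => left; rfl
      | cons i q =>
        right
        refine ⟨i, h2 i List.mem_cons_self, q, (ih q).mpr ⟨?_, ?_⟩, rfl⟩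
        · simpa using Nat.le_of_succ_le_succ h1
        · exact fun j hj => h2 j (List.mem_cons_of_mem _ hj)

theorem mem_of_sub {t : CTree α} {p : List ℕ} {s : CTree α} (h : t.sub p = some s) :
    p ∈ (CTree.allLists (sizeOf t) (sizeOf t)).toFinset := by
  rw [List.mem_toFinset, mem_allLists]
  have h1 := sub_sizeOf p t s h
  have h2 := one_le_sizeOf s
  exact ⟨by omega, sub_entries p t s h⟩

theorem mem_vertS {t : CTree α} {p : List ℕ} : p ∈ vertS t ↔ ∃ s, t.sub p = some s := by
  simp only [vertS, Finset.mem_filter, Option.isSome_iff_exists]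
  constructor
  · rintro ⟨_, h⟩; exact h
  · rintro ⟨s, h⟩; exact ⟨mem_of_sub h, ⟨s, h⟩⟩

theorem mem_uncS {t : CTree α} {p : List ℕ} :
    p ∈ uncS t ↔ ∃ ts, t.sub p = some (CTree.node ts) := by
  simp only [uncS, Finset.mem_filter]
  constructor
  · rintro ⟨_, h⟩; exact h
  · rintro ⟨ts, h⟩; exact ⟨mem_of_sub h, ⟨ts, h⟩⟩

theorem mem_colS {t : CTree α} {p : List ℕ} :
    p ∈ colS t ↔ ∃ a, t.sub p = some (CTree.leaf a) := by
  simp only [colS, Finset.mem_filter]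
  constructor
  · rintro ⟨_, h⟩; exact h
  · rintro ⟨a, h⟩; exact ⟨mem_of_sub h, ⟨a, h⟩⟩

theorem mem_edgeS {t : CTree α} {d : List ℕ} :
    d ∈ edgeS t ↔ d ≠ [] ∧ ∃ s, t.sub d = some s := by
  simp only [edgeS, Finset.mem_erase, mem_vertS]

theorem sub_of_prefix {t : CTree α} {q p : List ℕ} (hpre : q <+: p)
    {s : CTree α} (h : t.sub p = some s) : ∃ s', t.sub q = some s' := by
  obtain ⟨r, rfl⟩ := hpre
  rw [sub_append] at h
  cases hq : t.sub q with
  | none => rw [hq] at h; simp at h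
  | some s' => exact ⟨s', rfl⟩

theorem vertS_of_prefix {t : CTree α} {q p : List ℕ} (hpre : q <+: p)
    (h : p ∈ vertS t) : q ∈ vertS t := by
  rw [mem_vertS] at h ⊢
  obtain ⟨s, h⟩ := h
  exact sub_of_prefix hpre h

theorem parent_uncS {t : CTree α} {p : List ℕ} (h : p ∈ vertS t) (hp : p ≠ []) :
    p.dropLast ∈ uncS t := by
  obtain ⟨s, hs⟩ := mem_vertS.mp h
  have hps : p = p.dropLast ++ [p.getLast hp] := (List.dropLast_append_getLast hp).symm
  rw [hps, sub_append] at hs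
  cases hq : t.sub p.dropLast with
  | none => rw [hq] at hs; simp at hs
  | some s' =>
    rw [hq] at hs; simp at hs
    cases s' with
    | leaf a => simp [CTree.sub] at hs
    | node ts => exact mem_uncS.mpr ⟨ts, hq⟩

theorem edge_parent_uncS {t : CTree α} {d : List ℕ} (h : d ∈ edgeS t) :
    d.dropLast ∈ uncS t := by
  obtain ⟨hne, hv⟩ := Finset.mem_erase.mp h
  exact parent_uncS hv hne

theorem uncS_subset_vertS {t : CTree α} {p : List ℕ} (h : p ∈ uncS t) : p ∈ vertS t := by
  obtain ⟨ts, h⟩ := mem_uncS.mp h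
  exact mem_vertS.mpr ⟨_, h⟩

theorem colS_subset_vertS {t : CTree α} {p : List ℕ} (h : p ∈ colS t) : p ∈ vertS t := by
  obtain ⟨a, h⟩ := mem_colS.mp h
  exact mem_vertS.mpr ⟨_, h⟩

theorem uncS_colS_disj {t : CTree α} {p : List ℕ} (h1 : p ∈ uncS t) (h2 : p ∈ colS t) :
    False := by
  obtain ⟨ts, h1⟩ := mem_uncS.mp h1
  obtain ⟨a, h2⟩ := mem_colS.mp h2
  rw [h1] at h2
  simp at h2

theorem eq_of_leaf_prefix {t : CTree α} {c u : List ℕ} (hc : c ∈ colS t)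
    (hpre : c <+: u) (hu : u ∈ vertS t) : u = c := by
  obtain ⟨a, hs⟩ := mem_colS.mp hc
  obtain ⟨s, hsu⟩ := mem_vertS.mp hu
  obtain ⟨r, rfl⟩ := hpre
  cases r with
  | nil => simp
  | cons i r => rw [sub_append, hs] at hsu; simp [CTree.sub] at hsu

end KT
section Stage2
open CTree
variable {α : Type}

namespace KT

/-- `countP` with a pinned (classical) decidability instance. -/
def cnt {β : Type} (P : β → Prop) (A : Multiset β) : ℕ :=
  Multiset.countP P A

theorem cnt_zero {β : Type} (P : β → Prop) : cnt P (0 : Multiset β) = 0 := by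
  simp [cnt]

theorem cnt_cons {β : Type} (P : β → Prop) (a : β) (s : Multiset β) :
    cnt P (a ::ₘ s) = cnt P s + (if P a then 1 else 0) := by
  unfold cnt
  rw [Multiset.countP_cons]

theorem cnt_add {β : Type} (P : β → Prop) (s u : Multiset β) :
    cnt P (s + u) = cnt P s + cnt P u := by
  unfold cnt
  exact Multiset.countP_add _ s u

theorem cnt_eq_zero {β : Type} {P : β → Prop} {s : Multiset β} :
    cnt P s = 0 ↔ ∀ a ∈ s, ¬ P a := by
  unfold cnt
  exact Multiset.countP_eq_zero

theorem cnt_pos {β : Type} {P : β → Prop} {s : Multiset β} :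
    0 < cnt P s ↔ ∃ a ∈ s, P a := by
  unfold cnt
  exact Multiset.countP_pos

theorem cnt_congr {β : Type} {P Q : β → Prop} {s : Multiset β}
    (h : ∀ a ∈ s, P a ↔ Q a) : cnt P s = cnt Q s := by
  unfold cnt
  exact Multiset.countP_congr rfl (fun x hx => by rw [eq_iff_iff]; exact h x hx)

theorem cnt_le_of_le {β : Type} (P : β → Prop) {s u : Multiset β} (h : s ≤ u) :
    cnt P s ≤ cnt P u := by
  obtain ⟨v, rfl⟩ := Multiset.le_iff_exists_add.mp h
  rw [cnt_add]; omega

theorem cnt_or_disjoint {β : Type} (A : Multiset β) (P Q : β → Prop)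
    (h : ∀ d, ¬ (P d ∧ Q d)) :
    cnt (fun d => P d ∨ Q d) A = cnt P A + cnt Q A := by
  induction A using Multiset.induction with
  | empty => simp [cnt_zero]
  | cons a s ih =>
    simp only [cnt_cons, ih]
    by_cases hP : P a <;> by_cases hQ : Q a
    · exact absurd ⟨hP, hQ⟩ (h a)
    all_goals simp [hP, hQ]; try omega

theorem cnt_imp_split {β : Type} (A : Multiset β) (P Q : β → Prop) (h : ∀ d, Q d → P d) :
    cnt P A = cnt Q A + cnt (fun d => P d ∧ ¬ Q d) A := by
  induction A using Multiset.induction with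
  | empty => simp [cnt_zero]
  | cons a s ih =>
    simp only [cnt_cons, ih]
    by_cases hP : P a <;> by_cases hQ : Q a
    · simp [hP, hQ]; omega
    · simp [hP, hQ]; omega
    · exact absurd (h a hQ) hP
    · simp [hP, hQ]

theorem cnt_nodup_le_one {β : Type} {A : Multiset β} (hA : A.Nodup) (a : β) :
    cnt (fun d => d = a) A ≤ 1 := by
  induction A using Multiset.induction with
  | empty => simp [cnt_zero]
  | cons b s ih =>
    rw [Multiset.nodup_cons] at hA
    rw [cnt_cons]
    by_cases hb : b = a
    · subst hb
      have : cnt (fun d => d = b) s = 0 := cnt_eq_zero.mpr (fun x hx hxb => hA.1 (hxb ▸ hx))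
      simp [this]
    · simp [hb]; exact ih hA.2

theorem cnt_eq_one_of_mem {β : Type} {A : Multiset β} (hA : A.Nodup) {a : β}
    (ha : a ∈ A) : cnt (fun d => d = a) A = 1 := by
  have h1 : 0 < cnt (fun d => d = a) A := cnt_pos.mpr ⟨a, ha, rfl⟩
  have h2 := cnt_nodup_le_one hA a
  omega

theorem sum_map_ite {β : Type} (A : Multiset β) (P : β → Prop) [DecidablePred P] :
    (A.map (fun d => if P d then (1:ℤ) else 0)).sum = cnt P A := by
  induction A using Multiset.induction with
  | empty => simp [cnt_zero]
  | cons a s ih =>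
    simp only [Multiset.map_cons, Multiset.sum_cons, cnt_cons, ih]
    by_cases hP : P a <;> simp [hP] <;> push_cast <;> ring

theorem sum_apply_mult {β : Type} (A : Multiset β) (f : β → (List ℕ → ℤ)) (u : List ℕ) :
    ((A.map f).sum) u = ((A.map (fun d => f d u)).sum) := by
  induction A using Multiset.induction with
  | empty => simp
  | cons a s ih => simp [ih]

theorem wt_apply (t : CTree α) (d u : List ℕ) :
    CTree.wt t d u = (if u ∈ uncS t ∧ d.dropLast <+: u then (1:ℤ) else 0)
      - (if u ∈ uncS t ∧ d <+: u then 1 else 0) := by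
  unfold CTree.wt
  by_cases h1 : u ∈ uncS t
  · by_cases h2 : d <+: u
    · have h3 : d.dropLast <+: u := (List.dropLast_prefix d).trans h2
      simp [h1, h2, h3]
    · by_cases h3 : d.dropLast <+: u <;> simp [h1, h2, h3]
  · simp [h1]

/-- Sum of the weights of the edges in `A`. -/
def wsum (t : CTree α) (A : Multiset (EdgeVar t)) : List ℕ → ℤ :=
  (A.map (fun d => CTree.wt t d.1)).sum

/-- Net outflow minus inflow of `A` at the vertex `u`. -/
def net (t : CTree α) (A : Multiset (EdgeVar t)) (u : List ℕ) : ℤ :=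
  (cnt (fun d => d.1.dropLast = u) A : ℤ) - (cnt (fun d => d.1 = u) A : ℤ)

theorem net_add (t : CTree α) (A B : Multiset (EdgeVar t)) (u : List ℕ) :
    net t (A + B) u = net t A u + net t B u := by
  unfold net
  rw [cnt_add, cnt_add]
  push_cast
  ring

theorem wsum_apply (t : CTree α) (A : Multiset (EdgeVar t)) {u : List ℕ}
    (hu : u ∈ uncS t) :
    wsum t A u = (cnt (fun d => d.1.dropLast <+: u) A : ℤ)
      - (cnt (fun d => d.1 <+: u) A : ℤ) := by
  unfold wsum
  rw [sum_apply_mult]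
  have hfg : ∀ d ∈ A, CTree.wt t d.1 u =
      (if d.1.dropLast <+: u then (1:ℤ) else 0) - (if d.1 <+: u then 1 else 0) := by
    intro d _
    rw [wt_apply]
    simp only [hu, true_and]
  rw [Multiset.map_congr rfl hfg]
  rw [Multiset.sum_map_sub, sum_map_ite, sum_map_ite]

theorem prefix_dropLast_iff {q u : List ℕ} (hu : u ≠ []) :
    q <+: u ↔ q = u ∨ q <+: u.dropLast := by
  conv_lhs => rw [← List.dropLast_append_getLast hu]
  rw [List.prefix_concat_iff, List.dropLast_append_getLast hu]

theorem not_self_and_prefix_dropLast {q u : List ℕ} (hu : u ≠ []) :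
    ¬ (q = u ∧ q <+: u.dropLast) := by
  rintro ⟨rfl, h⟩
  have h1 := h.length_le
  have h2 : q.dropLast.length = q.length - 1 := List.length_dropLast
  have h3 : 1 ≤ q.length := List.length_pos_iff.mpr hu
  omega

theorem uncS_dropLast {t : CTree α} {u : List ℕ} (h : u ∈ uncS t) (hu : u ≠ []) :
    u.dropLast ∈ uncS t :=
  parent_uncS (uncS_subset_vertS h) hu

theorem net_eq_of_wsum_eq (t : CTree α) (A B : Multiset (EdgeVar t))
    (h : wsum t A = wsum t B) :
    ∀ u ∈ uncS t, net t A u = net t B u := by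
  have hF : ∀ u ∈ uncS t,
      (cnt (fun d : EdgeVar t => d.1.dropLast <+: u) A : ℤ) - (cnt (fun d => d.1 <+: u) A : ℤ)
      = (cnt (fun d : EdgeVar t => d.1.dropLast <+: u) B : ℤ) - (cnt (fun d => d.1 <+: u) B : ℤ) := by
    intro u hu
    rw [← wsum_apply t A hu, ← wsum_apply t B hu, h]
  have key : ∀ (C : Multiset (EdgeVar t)) (u : List ℕ), u ≠ [] →
      (cnt (fun d : EdgeVar t => d.1.dropLast <+: u) C = cnt (fun d : EdgeVar t => d.1.dropLast = u) C
        + cnt (fun d : EdgeVar t => d.1.dropLast <+: u.dropLast) C)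
      ∧ (cnt (fun d : EdgeVar t => d.1 <+: u) C = cnt (fun d : EdgeVar t => d.1 = u) C
        + cnt (fun d : EdgeVar t => d.1 <+: u.dropLast) C) := by
    intro C u hu
    constructor
    · rw [cnt_congr (fun d _ => prefix_dropLast_iff hu :
        ∀ d ∈ C, (d.1.dropLast <+: u) ↔ (d.1.dropLast = u ∨ d.1.dropLast <+: u.dropLast))]
      exact cnt_or_disjoint C _ _ (fun d => not_self_and_prefix_dropLast hu)
    · rw [cnt_congr (fun d _ => prefix_dropLast_iff hu :
        ∀ d ∈ C, (d.1 <+: u) ↔ (d.1 = u ∨ d.1 <+: u.dropLast))]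
      exact cnt_or_disjoint C _ _ (fun d => not_self_and_prefix_dropLast hu)
  have base : ∀ (C : Multiset (EdgeVar t)),
      (cnt (fun d : EdgeVar t => d.1.dropLast <+: ([] : List ℕ)) C
        = cnt (fun d : EdgeVar t => d.1.dropLast = ([] : List ℕ)) C)
      ∧ (cnt (fun d : EdgeVar t => d.1 <+: ([] : List ℕ)) C = 0)
      ∧ (cnt (fun d : EdgeVar t => d.1 = ([] : List ℕ)) C = 0) := by
    intro C
    refine ⟨cnt_congr (fun d _ => List.prefix_nil), ?_, ?_⟩
    · rw [cnt_eq_zero]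
      intro d _ hd
      exact (mem_edgeS.mp d.2).1 (List.prefix_nil.mp hd)
    · rw [cnt_eq_zero]
      intro d _ hd
      exact (mem_edgeS.mp d.2).1 hd
  intro u hu
  by_cases hu0 : u = []
  · subst hu0
    obtain ⟨a1, a2, a3⟩ := base A
    obtain ⟨b1, b2, b3⟩ := base B
    have h0 := hF [] hu
    unfold net
    rw [a3, b3, a2, b2, a1, b1] at *
    omega
  · obtain ⟨a1, a2⟩ := key A u hu0
    obtain ⟨b1, b2⟩ := key B u hu0
    have h1 := hF u hu
    have h2 := hF u.dropLast (uncS_dropLast hu hu0)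
    unfold net
    rw [a1, a2, b1, b2] at h1
    push_cast at h1 h2 ⊢
    omega

end KT
end Stage2
section Stage3
open CTree
variable {α : Type}

namespace KT

/-- The edges of the path from `v` down to `c`, as a multiset of `EdgeVar`s. -/
def pathE (t : CTree α) (v c : List ℕ) : Multiset (EdgeVar t) :=
  (((edgeS t).filter (fun d => v <+: d ∧ d ≠ v ∧ d <+: c)).attach.val).map
    (fun x => (⟨x.1, (Finset.mem_filter.mp x.2).1⟩ : EdgeVar t))

theorem pathE_map_val (t : CTree α) (v c : List ℕ) :
    (pathE t v c).map Subtype.val = CTree.pathEdges t v c := by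
  unfold pathE CTree.pathEdges
  exact (Multiset.map_map _ _ _).trans (by rw [Finset.attach_val]; exact Multiset.attach_map_val _)

theorem mem_pathE {t : CTree α} {v c : List ℕ} {e : EdgeVar t} :
    e ∈ pathE t v c ↔ v <+: e.1 ∧ e.1 ≠ v ∧ e.1 <+: c := by
  constructor
  · intro h
    have : e.1 ∈ (pathE t v c).map Subtype.val := Multiset.mem_map_of_mem _ h
    rw [pathE_map_val] at this
    unfold CTree.pathEdges at this
    rw [Finset.mem_val, Finset.mem_filter] at this
    exact this.2
  · rintro ⟨h1, h2, h3⟩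
    unfold pathE
    have hmem : e.1 ∈ (edgeS t).filter (fun d => v <+: d ∧ d ≠ v ∧ d <+: c) :=
      Finset.mem_filter.mpr ⟨e.2, h1, h2, h3⟩
    refine Multiset.mem_map.mpr ?_
    exact ⟨⟨e.1, hmem⟩, Finset.mem_val.mpr (Finset.mem_attach _ _), Subtype.ext rfl⟩

theorem pathE_nodup (t : CTree α) (v c : List ℕ) : (pathE t v c).Nodup := by
  unfold pathE
  apply Multiset.Nodup.map
  · intro x y h
    exact Subtype.ext (congrArg (fun (e : EdgeVar t) => e.1) h)
  · exact Finset.attach _ |>.nodup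

theorem sv_colS_eq_zero {t : CTree α} {c : List ℕ} (hc : c ∈ colS t) :
    CTree.sv t c = 0 := by
  funext u
  unfold CTree.sv
  by_cases h : u ∈ uncS t ∧ c <+: u
  · obtain ⟨h1, h2⟩ := h
    have := eq_of_leaf_prefix hc h2 (uncS_subset_vertS h1)
    subst this
    exact absurd hc (fun hcc => uncS_colS_disj h1 hcc)
  · simp [h]

theorem pathE_self_eq_zero (t : CTree α) (c : List ℕ) : pathE t c c = 0 := by
  rw [Multiset.eq_zero_iff_forall_notMem]
  intro e he
  obtain ⟨h1, h2, h3⟩ := mem_pathE.mp he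
  exact h2 (h1.eq_of_length_le h3.length_le).symm

theorem wsum_add (t : CTree α) (A B : Multiset (EdgeVar t)) :
    wsum t (A + B) = wsum t A + wsum t B := by
  unfold wsum
  rw [Multiset.map_add, Multiset.sum_add]

theorem wsum_pathE (t : CTree α) {c : List ℕ} (hc : c ∈ colS t) :
    ∀ (n : ℕ) (v : List ℕ), c.length - v.length ≤ n → v ∈ vertS t → v <+: c →
    wsum t (pathE t v c) = CTree.sv t v := by
  intro n
  induction n with
  | zero =>
    intro v hn hv hpre
    have hvc : v = c := hpre.eq_of_length_le (by omega)
    subst hvc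
    rw [pathE_self_eq_zero, sv_colS_eq_zero hc]
    rfl
  | succ n ih =>
    intro v hn hv hpre
    by_cases hvc : v = c
    · subst hvc
      rw [pathE_self_eq_zero, sv_colS_eq_zero hc]
      rfl
    · -- c = v ++ x :: r
      obtain ⟨r', hr'⟩ := hpre
      have hr'ne : r' ≠ [] := by rintro rfl; simp at hr'; exact hvc hr' 
      obtain ⟨x, r, rfl⟩ : ∃ x rr, r' = x :: rr := by
        cases r' with
        | nil => exact absurd rfl hr'ne
        | cons x rr => exact ⟨x, rr, rfl⟩
      set e₀ : List ℕ := v ++ [x] with he₀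
      have he₀c : e₀ <+: c := ⟨r, by rw [← hr']; simp [he₀]⟩
      have he₀v : e₀ ∈ vertS t := vertS_of_prefix he₀c (colS_subset_vertS hc)
      have he₀ne : e₀ ≠ [] := by simp [he₀]
      have he₀edge : e₀ ∈ edgeS t := Finset.mem_erase.mpr ⟨he₀ne, he₀v⟩
      have hlen : e₀.length = v.length + 1 := by simp [he₀]
      have hve₀ : v <+: e₀ := ⟨[x], rfl⟩
      set E₀ : EdgeVar t := ⟨e₀, he₀edge⟩ with hE₀
      -- pathE t v c = E₀ ::ₘ pathE t e₀ c
      have hsplit : pathE t v c = E₀ ::ₘ pathE t e₀ c := by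
        have hnocons : E₀ ∉ pathE t e₀ c := by
          intro hmem
          exact (mem_pathE.mp hmem).2.1 rfl
        rw [(Multiset.Nodup.ext (pathE_nodup t v c)
          ((Multiset.nodup_cons).mpr ⟨hnocons, pathE_nodup t e₀ c⟩))]
        intro e
        rw [Multiset.mem_cons, mem_pathE, mem_pathE]
        constructor
        · rintro ⟨h1, h2, h3⟩
          have hee₀ : e₀ <+: e.1 := by
            apply List.prefix_of_prefix_length_le he₀c h3
            have := h1.length_le
            have hne : e.1.length ≠ v.length := by
              intro hl
              exact h2 (h1.eq_of_length_le hl.le).symm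
            omega
          by_cases he : e = E₀
          · exact Or.inl he
          · right
            refine ⟨hee₀, ?_, h3⟩
            intro heq
            exact he (Subtype.ext heq)
        · rintro (rfl | ⟨h1, h2, h3⟩)
          · exact ⟨hve₀, by simp [hE₀, he₀], he₀c⟩
          · refine ⟨hve₀.trans h1, ?_, h3⟩
            intro heq
            have := h1.length_le
            rw [heq] at this
            omega
      rw [hsplit]
      have hcons : wsum t (E₀ ::ₘ pathE t e₀ c) = CTree.wt t e₀ + wsum t (pathE t e₀ c) := by
        unfold wsum
        rw [Multiset.map_cons, Multiset.sum_cons]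
      rw [hcons]
      have hdrop : e₀.dropLast = v := by simp [he₀]
      have hwt : CTree.wt t e₀ = CTree.sv t v - CTree.sv t e₀ := by
        funext u
        rw [wt_apply]
        unfold CTree.sv
        rw [hdrop]
        by_cases h2 : u ∈ uncS t ∧ e₀ <+: u
        · have h3 : u ∈ uncS t ∧ v <+: u := ⟨h2.1, hve₀.trans h2.2⟩
          simp [h2, h3]
        · by_cases h3 : u ∈ uncS t ∧ v <+: u <;> simp [h2, h3]
      rw [hwt, ih e₀ (by omega) he₀v he₀c]
      abel

/-- The central relation: the difference of the two monomials lies in the ideal. -/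
def Rel (t : CTree α) (A B : Multiset (EdgeVar t)) : Prop :=
  (A.map MvPolynomial.X).prod - (B.map MvPolynomial.X).prod ∈ simIdeal t

theorem Rel.refl (t : CTree α) (A : Multiset (EdgeVar t)) : Rel t A A := by
  unfold Rel
  rw [sub_self]
  exact Ideal.zero_mem _

theorem Rel.symm {t : CTree α} {A B : Multiset (EdgeVar t)} (h : Rel t A B) : Rel t B A := by
  unfold Rel at *
  have := neg_mem h
  rwa [neg_sub] at this

theorem Rel.trans {t : CTree α} {A B C : Multiset (EdgeVar t)}
    (h1 : Rel t A B) (h2 : Rel t B C) : Rel t A C := by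
  unfold Rel at *
  have := add_mem h1 h2
  rwa [sub_add_sub_cancel] at this

theorem Rel.add_left {t : CTree α} {A B : Multiset (EdgeVar t)} (C : Multiset (EdgeVar t))
    (h : Rel t A B) : Rel t (C + A) (C + B) := by
  unfold Rel at *
  rw [Multiset.map_add, Multiset.map_add, Multiset.prod_add, Multiset.prod_add,
    ← mul_sub]
  exact Ideal.mul_mem_left _ _ h

theorem Rel_gen {t : CTree α} {A B : Multiset (EdgeVar t)}
    (hd : Disjoint A B) (hsim : CTree.Sim t (A.map Subtype.val) (B.map Subtype.val)) :
    Rel t A B :=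
  Ideal.subset_span ⟨A, B, hd, hsim, rfl⟩

end KT
end Stage3
section Stage4
open CTree
variable {α : Type}

namespace KT

theorem length_dropLast_succ {d : List ℕ} (hd : d ≠ []) :
    d.dropLast.length + 1 = d.length := by
  have h1 : d.dropLast.length = d.length - 1 := List.length_dropLast
  have h2 := List.length_pos_iff.mpr hd
  omega

theorem descend (t : CTree α) (A : Multiset (EdgeVar t))
    (hpos : ∀ u ∈ uncS t, (∃ e ∈ A, e.1 = u) → 0 ≤ net t A u) :
    ∀ (n : ℕ) (s : CTree α) (u : List ℕ), sizeOf s ≤ n → t.sub u = some s → u ≠ [] →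
      (∃ e ∈ A, e.1 = u) →
      ∃ c ∈ colS t, u <+: c ∧ ∀ e : EdgeVar t, u <+: e.1 → e.1 <+: c → e ∈ A := by
  intro n
  induction n with
  | zero => intro s u hs _ _ _; have := one_le_sizeOf s; omega
  | succ n ih =>
    intro s u hs hsub hu hmem
    cases s with
    | leaf a =>
      refine ⟨u, mem_colS.mpr ⟨a, hsub⟩, List.prefix_refl u, ?_⟩
      intro e h1 h2
      have he : e.1 = u := h2.eq_of_length_le h1.length_le
      obtain ⟨e', he'A, he'⟩ := hmem
      have : e = e' := Subtype.ext (by rw [he, he'])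
      rwa [this]
    | node ts =>
      have huS : u ∈ uncS t := mem_uncS.mpr ⟨ts, hsub⟩
      have hin : 0 < cnt (fun e : EdgeVar t => e.1 = u) A := by
        obtain ⟨e, he, heu⟩ := hmem
        exact cnt_pos.mpr ⟨e, he, heu⟩
      have hnet := hpos u huS hmem
      have hout : 0 < cnt (fun e : EdgeVar t => e.1.dropLast = u) A := by
        unfold net at hnet
        omega
      obtain ⟨e', he'A, he'drop⟩ := cnt_pos.mp hout
      have hu'ne : e'.1 ≠ [] := (mem_edgeS.mp e'.2).1
      have husub : u <+: e'.1 := he'drop ▸ List.dropLast_prefix e'.1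
      obtain ⟨s', hsub'⟩ := (mem_edgeS.mp e'.2).2
      -- s' is a child of s
      have hsize : sizeOf s' < sizeOf (CTree.node ts) := by
        have hdecomp : e'.1 = u ++ [e'.1.getLast hu'ne] := by
          conv_lhs => rw [← List.dropLast_append_getLast hu'ne]
          rw [he'drop]
        rw [hdecomp, sub_append, hsub] at hsub'
        simp only [Option.bind_some] at hsub'
        simp only [CTree.sub] at hsub'
        cases hts : ts[e'.1.getLast hu'ne]? with
        | none => rw [hts] at hsub'; simp at hsub'
        | some ch =>
          rw [hts] at hsub'
          simp only [CTree.sub] at hsub'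
          have : s' = ch := by injection hsub' with h; exact h.symm
          subst this
          exact lt_sizeOf_node (List.mem_of_getElem? hts)
      obtain ⟨c, hc, hpre', hall'⟩ :=
        ih s' e'.1 (by omega) hsub' hu'ne ⟨e', he'A, rfl⟩
      refine ⟨c, hc, husub.trans hpre', ?_⟩
      intro e h1 h2
      by_cases hlen : e.1.length ≤ u.length
      · have he : e.1 = u := (h1.eq_of_length_le hlen).symm
        obtain ⟨e'', he''A, he''⟩ := hmem
        have : e = e'' := Subtype.ext (by rw [he, he''])
        rwa [this]
      · apply hall' e ?_ h2
        apply List.prefix_of_prefix_length_le hpre' h2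
        have := length_dropLast_succ hu'ne
        rw [he'drop] at this
        omega

theorem path_le (t : CTree α) {A : Multiset (EdgeVar t)} {v c : List ℕ} {d : EdgeVar t}
    (hd : d ∈ A) (hdrop : d.1.dropLast = v) (hpre : d.1 <+: c)
    (hall : ∀ e : EdgeVar t, d.1 <+: e.1 → e.1 <+: c → e ∈ A) :
    pathE t v c ≤ A := by
  have hdne := (mem_edgeS.mp d.2).1
  have hdlen : v.length + 1 = d.1.length := by
    rw [← hdrop]; exact length_dropLast_succ hdne
  rw [Multiset.le_iff_subset (pathE_nodup t v c)]
  intro e he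
  obtain ⟨h1, h2, h3⟩ := mem_pathE.mp he
  apply hall e ?_ h3
  apply List.prefix_of_prefix_length_le hpre h3
  have hle := h1.length_le
  have hne : e.1.length ≠ v.length := fun hl => h2 (h1.eq_of_length_le hl.le).symm
  omega

theorem mem_pathE_first {t : CTree α} {v c : List ℕ} {d : EdgeVar t}
    (hdrop : d.1.dropLast = v) (hpre : d.1 <+: c) : d ∈ pathE t v c := by
  have hdne := (mem_edgeS.mp d.2).1
  have hdlen : v.length + 1 = d.1.length := by
    rw [← hdrop]; exact length_dropLast_succ hdne
  rw [mem_pathE]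
  refine ⟨hdrop ▸ List.dropLast_prefix d.1, ?_, hpre⟩
  intro h
  rw [h] at hdlen
  omega

theorem eq_zero_of_net_zero (t : CTree α) (B : Multiset (EdgeVar t))
    (h : ∀ u ∈ uncS t, net t B u = 0) : B = 0 := by
  by_contra hB
  obtain ⟨d, hd, hmin⟩ := Finset.exists_min_image B.toFinset (fun e => e.1.length)
    (Multiset.toFinset_nonempty.mpr hB)
  rw [Multiset.mem_toFinset] at hd
  have hvunc := edge_parent_uncS d.2
  have hdne := (mem_edgeS.mp d.2).1
  have hlen : d.1.dropLast.length + 1 = d.1.length := length_dropLast_succ hdne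
  have hin : cnt (fun e : EdgeVar t => e.1 = d.1.dropLast) B = 0 := by
    rw [cnt_eq_zero]
    intro e he hev
    have h1 := hmin e (Multiset.mem_toFinset.mpr he)
    have h2 : e.1.length = d.1.dropLast.length := by rw [hev]
    omega
  have hout : 0 < cnt (fun e : EdgeVar t => e.1.dropLast = d.1.dropLast) B :=
    cnt_pos.mpr ⟨d, hd, rfl⟩
  have hz := h d.1.dropLast hvunc
  unfold net at hz
  omega

theorem net_zero_mult (t : CTree α) (u : List ℕ) : net t (0 : Multiset (EdgeVar t)) u = 0 := by
  unfold net cnt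
  simp

theorem key_step (t : CTree α) (A B : Multiset (EdgeVar t))
    (hdisj : ∀ e : EdgeVar t, e ∈ A → e ∉ B)
    (hnet : ∀ u ∈ uncS t, net t A u = net t B u)
    (d : EdgeVar t) (hd : d ∈ A)
    (hmin : ∀ e : EdgeVar t, e ∈ A + B → d.1.length ≤ e.1.length) :
    ∃ p₁ p₂ : Multiset (EdgeVar t), p₁ ≤ A ∧ p₂ ≤ B ∧ p₁ ≠ 0 ∧ p₂ ≠ 0 ∧
      Rel t p₁ p₂ ∧ wsum t p₁ = wsum t p₂ := by
  have hdne := (mem_edgeS.mp d.2).1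
  set v := d.1.dropLast with hv
  have hvunc : v ∈ uncS t := edge_parent_uncS d.2
  have hvlen : v.length + 1 = d.1.length := length_dropLast_succ hdne
  -- no edge of A or B equals v
  have hshort : ∀ e : EdgeVar t, e ∈ A + B → e.1 ≠ v := by
    intro e he hev
    have h1 := hmin e he
    have h2 : e.1.length = v.length := by rw [hev]
    omega
  have hinA : cnt (fun e : EdgeVar t => e.1 = v) A = 0 := by
    rw [cnt_eq_zero]
    exact fun e he hev => hshort e (Multiset.mem_add.mpr (Or.inl he)) hev
  have hinB : cnt (fun e : EdgeVar t => e.1 = v) B = 0 := by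
    rw [cnt_eq_zero]
    exact fun e he hev => hshort e (Multiset.mem_add.mpr (Or.inr he)) hev
  have houtA : 0 < cnt (fun e : EdgeVar t => e.1.dropLast = v) A :=
    cnt_pos.mpr ⟨d, hd, rfl⟩
  have hnv := hnet v hvunc
  have houtB : 0 < cnt (fun e : EdgeVar t => e.1.dropLast = v) B := by
    unfold net at hnv
    omega
  obtain ⟨d', hd', hdrop'⟩ := cnt_pos.mp houtB
  -- positivity hypotheses for descent
  have hposA : ∀ u ∈ uncS t, (∃ e ∈ A, e.1 = u) → 0 ≤ net t A u := by
    intro u hu ⟨e, he, heu⟩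
    have hB0 : cnt (fun f : EdgeVar t => f.1 = u) B = 0 := by
      rw [cnt_eq_zero]
      intro f hf hfu
      exact hdisj e he (Subtype.ext (heu ▸ hfu) ▸ hf)
    have := hnet u hu
    unfold net at this ⊢
    omega
  have hposB : ∀ u ∈ uncS t, (∃ e ∈ B, e.1 = u) → 0 ≤ net t B u := by
    intro u hu ⟨e, he, heu⟩
    have hA0 : cnt (fun f : EdgeVar t => f.1 = u) A = 0 := by
      rw [cnt_eq_zero]
      intro f hf hfu
      exact hdisj f hf (Subtype.ext (hfu.trans heu.symm) ▸ he)
    have := hnet u hu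
    unfold net at this ⊢
    omega
  -- descend in A
  obtain ⟨sA, hsubA⟩ := (mem_edgeS.mp d.2).2
  obtain ⟨c₁, hc₁, hpre₁, hall₁⟩ :=
    descend t A hposA (sizeOf sA) sA d.1 le_rfl hsubA hdne ⟨d, hd, rfl⟩
  obtain ⟨sB, hsubB⟩ := (mem_edgeS.mp d'.2).2
  have hd'ne := (mem_edgeS.mp d'.2).1
  obtain ⟨c₂, hc₂, hpre₂, hall₂⟩ :=
    descend t B hposB (sizeOf sB) sB d'.1 le_rfl hsubB hd'ne ⟨d', hd', rfl⟩
  have hd'len : v.length + 1 = d'.1.length := by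
    rw [← hdrop']; exact length_dropLast_succ hd'ne
  refine ⟨pathE t v c₁, pathE t v c₂,
    path_le t hd rfl hpre₁ hall₁, path_le t hd' hdrop' hpre₂ hall₂, ?_, ?_, ?_, ?_⟩
  · intro h0
    have := mem_pathE_first (t := t) (rfl : d.1.dropLast = v) hpre₁
    rw [h0] at this
    simp at this
  · intro h0
    have := mem_pathE_first (t := t) hdrop' hpre₂
    rw [h0] at this
    simp at this
  · -- Rel via the generator
    apply Rel_gen
    · -- disjointness of the two paths
      rw [Multiset.disjoint_left]
      intro e he₁ he₂
      obtain ⟨g1, g2, g3⟩ := mem_pathE.mp he₁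
      obtain ⟨f1, f2, f3⟩ := mem_pathE.mp he₂
      have helen : v.length < e.1.length := by
        have := g1.length_le
        have hne : e.1.length ≠ v.length := fun hl => g2 (g1.eq_of_length_le hl.le).symm
        omega
      have hde : d.1 <+: e.1 := List.prefix_of_prefix_length_le hpre₁ g3 (by omega)
      have hd'e : d'.1 <+: e.1 := List.prefix_of_prefix_length_le hpre₂ f3 (by omega)
      have : d.1 = d'.1 :=
        (List.prefix_of_prefix_length_le hde hd'e (by omega)).eq_of_length_le (by omega)
      exact hdisj d hd (Subtype.ext this ▸ hd')
    · refine ⟨v, uncS_subset_vertS hvunc, c₁, hc₁, c₂, hc₂,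
        (List.dropLast_prefix d.1).trans hpre₁, ?_, ?_, ?_⟩
      · exact (hdrop' ▸ List.dropLast_prefix d'.1).trans hpre₂
      · exact pathE_map_val t v c₁
      · exact pathE_map_val t v c₂
  · -- equal weight sums
    have hvvert := uncS_subset_vertS hvunc
    rw [wsum_pathE t hc₁ (c₁.length - v.length) v le_rfl hvvert
      ((List.dropLast_prefix d.1).trans hpre₁)]
    rw [wsum_pathE t hc₂ (c₂.length - v.length) v le_rfl hvvert
      ((hdrop' ▸ List.dropLast_prefix d'.1).trans hpre₂)]

theorem wsum_zero (t : CTree α) : wsum t (0 : Multiset (EdgeVar t)) = 0 := by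
  unfold wsum
  simp

theorem main_rel (t : CTree α) : ∀ (n : ℕ) (A B : Multiset (EdgeVar t)),
    Multiset.card A + Multiset.card B ≤ n → wsum t A = wsum t B → Rel t A B := by
  intro n
  induction n using Nat.strong_induction_on with
  | _ n ih =>
    intro A B hcard hw
    have hnet := net_eq_of_wsum_eq t A B hw
    by_cases hA0 : A = 0
    · subst hA0
      have hB0 : B = 0 := eq_zero_of_net_zero t B (fun u hu => by
        have := hnet u hu
        rw [net_zero_mult] at this
        omega)
      subst hB0
      exact Rel.refl t 0
    by_cases hB0 : B = 0
    · subst hB0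
      have hA0' : A = 0 := eq_zero_of_net_zero t A (fun u hu => by
        have := hnet u hu
        rw [net_zero_mult] at this
        omega)
      exact absurd hA0' hA0
    -- obtain the pieces p₁ ≤ A, p₂ ≤ B to exchange
    have hpieces : ∃ p₁ p₂ : Multiset (EdgeVar t), p₁ ≤ A ∧ p₂ ≤ B ∧ p₁ ≠ 0 ∧ p₂ ≠ 0 ∧
        Rel t p₁ p₂ ∧ wsum t p₁ = wsum t p₂ := by
      by_cases hcom : ∃ e : EdgeVar t, e ∈ A ∧ e ∈ B
      · obtain ⟨e, heA, heB⟩ := hcom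
        exact ⟨{e}, {e}, Multiset.singleton_le.mpr heA, Multiset.singleton_le.mpr heB,
          by simp, by simp, Rel.refl t {e}, rfl⟩
      · push_neg at hcom
        obtain ⟨d, hdT, hmin⟩ := Finset.exists_min_image (A + B).toFinset
          (fun e => e.1.length) (Multiset.toFinset_nonempty.mpr (by
            intro h0
            have hAle : A ≤ A + B := Multiset.le_add_right A B
            rw [h0] at hAle
            exact hA0 (Multiset.le_zero.mp hAle)))
        rw [Multiset.mem_toFinset] at hdT
        have hmin' : ∀ e : EdgeVar t, e ∈ A + B → d.1.length ≤ e.1.length :=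
          fun e he => hmin e (Multiset.mem_toFinset.mpr he)
        rcases Multiset.mem_add.mp hdT with hdA | hdB
        · exact key_step t A B hcom hnet d hdA hmin'
        · obtain ⟨p₂, p₁, h2, h1, hn2, hn1, hrel, hws⟩ :=
            key_step t B A (fun e heB heA => hcom e heA heB)
              (fun u hu => (hnet u hu).symm) d hdB
              (fun e he => hmin' e (by rwa [add_comm] at he))
          exact ⟨p₁, p₂, h1, h2, hn1, hn2, hrel.symm, hws.symm⟩
    obtain ⟨p₁, p₂, h1, h2, hne1, hne2, hrel, hws⟩ := hpieces
    have hA' : A - p₁ + p₁ = A := tsub_add_cancel_of_le h1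
    have hB' : B - p₂ + p₂ = B := tsub_add_cancel_of_le h2
    have e1 : wsum t (A - p₁) + wsum t p₁ = wsum t A := by rw [← wsum_add, hA']
    have e2 : wsum t (B - p₂) + wsum t p₂ = wsum t B := by rw [← wsum_add, hB']
    have hwsub : wsum t (A - p₁) = wsum t (B - p₂) := by
      have : wsum t (A - p₁) + wsum t p₁ = wsum t (B - p₂) + wsum t p₂ := by
        rw [e1, e2, hw]
      rw [hws] at this
      exact add_right_cancel this
    have hc1 : Multiset.card (A - p₁) + Multiset.card p₁ = Multiset.card A := by
      rw [← Multiset.card_add, hA']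
    have hc2 : Multiset.card (B - p₂) + Multiset.card p₂ = Multiset.card B := by
      rw [← Multiset.card_add, hB']
    have hp1 : 0 < Multiset.card p₁ := Multiset.card_pos.mpr hne1
    have hp2 : 0 < Multiset.card p₂ := Multiset.card_pos.mpr hne2
    have hrec : Rel t (A - p₁) (B - p₂) :=
      ih (Multiset.card (A - p₁) + Multiset.card (B - p₂)) (by omega) _ _ le_rfl hwsub
    have r1 : Rel t (A - p₁ + p₁) (A - p₁ + p₂) := Rel.add_left _ hrel
    have r2 : Rel t (A - p₁ + p₂) (B - p₂ + p₂) := by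
      rw [add_comm (A - p₁) p₂, add_comm (B - p₂) p₂]
      exact Rel.add_left _ hrec
    have := (r1.trans r2)
    rwa [hA', hB'] at this

end KT
end Stage4
section Stage5
open CTree
variable {α : Type}

namespace KT

theorem phi_prod (t : CTree α) (A : Multiset (EdgeVar t)) :
    toricHom t ((A.map MvPolynomial.X).prod) =
      AddMonoidAlgebra.single (wsum t A) (1 : ℂ) := by
  induction A using Multiset.induction with
  | empty =>
    rw [wsum_zero]
    simp only [Multiset.map_zero, Multiset.prod_zero, map_one]
    exact AddMonoidAlgebra.one_def
  | cons e A ih =>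
    rw [Multiset.map_cons, Multiset.prod_cons, map_mul, ih]
    have hX : toricHom t (MvPolynomial.X e) =
        AddMonoidAlgebra.single (CTree.wt t e.1) (1 : ℂ) := MvPolynomial.aeval_X _ e
    rw [hX, AddMonoidAlgebra.single_mul_single, one_mul]
    congr 1
    unfold wsum
    rw [Multiset.map_cons, Multiset.sum_cons]

theorem prod_X_toMultiset (t : CTree α) (m : EdgeVar t →₀ ℕ) :
    ((Finsupp.toMultiset m).map MvPolynomial.X).prod =
      (MvPolynomial.monomial m (1 : ℂ) : MvPolynomial (EdgeVar t) ℂ) := by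
  induction m using Finsupp.induction with
  | zero => simp
  | single_add a b f ha hb ih =>
    rw [Finsupp.toMultiset_add, Multiset.map_add, Multiset.prod_add, ih,
      Finsupp.toMultiset_single, Multiset.map_nsmul]
    rw [show Multiset.map MvPolynomial.X ({a} : Multiset (EdgeVar t)) = {MvPolynomial.X a} from rfl]
    rw [Multiset.nsmul_singleton, Multiset.prod_replicate, MvPolynomial.X_pow_eq_monomial,
      MvPolynomial.monomial_mul, one_mul]

theorem phi_monomial (t : CTree α) (m : EdgeVar t →₀ ℕ) (c : ℂ) :
    toricHom t (MvPolynomial.monomial m c) =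
      AddMonoidAlgebra.single (wsum t (Finsupp.toMultiset m)) c := by
  have h1 : (MvPolynomial.monomial m c : MvPolynomial (EdgeVar t) ℂ)
      = MvPolynomial.C c * MvPolynomial.monomial m 1 := by
    rw [MvPolynomial.C_mul_monomial, mul_one]
  rw [h1, map_mul, ← prod_X_toMultiset t m, phi_prod]
  have h2 : toricHom t (MvPolynomial.C c) = AddMonoidAlgebra.single 0 c := by
    rw [show (MvPolynomial.C c : MvPolynomial (EdgeVar t) ℂ) = algebraMap ℂ _ c from rfl]
    rw [AlgHom.commutes]
    rw [Algebra.algebraMap_eq_smul_one]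
    rw [AddMonoidAlgebra.one_def, AddMonoidAlgebra.smul_single', mul_one]
  rw [h2, AddMonoidAlgebra.single_mul_single, zero_add, mul_one]

theorem exists_partner (t : CTree α) (p : MvPolynomial (EdgeVar t) ℂ)
    (hp : toricHom t p = 0) {m₀ : EdgeVar t →₀ ℕ} (hm₀ : m₀ ∈ p.support) :
    ∃ m₁ ∈ p.support, m₁ ≠ m₀ ∧
      wsum t (Finsupp.toMultiset m₁) = wsum t (Finsupp.toMultiset m₀) := by
  by_contra hcon
  push_neg at hcon
  have hsum : toricHom t p = ∑ m ∈ p.support,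
      AddMonoidAlgebra.single (wsum t (Finsupp.toMultiset m)) (MvPolynomial.coeff m p) := by
    conv_lhs => rw [MvPolynomial.as_sum p]
    rw [map_sum]
    exact Finset.sum_congr rfl (fun m _ => phi_monomial t m _)
  set μ := wsum t (Finsupp.toMultiset m₀) with hμ
  have happ : (0 : ℂ) = ∑ m ∈ p.support,
      (if wsum t (Finsupp.toMultiset m) = μ then MvPolynomial.coeff m p else 0) := by
    calc (0 : ℂ) = (toricHom t p).coeff μ := by
          rw [hp]; rfl
      _ = (∑ m ∈ p.support, AddMonoidAlgebra.single (wsum t (Finsupp.toMultiset m))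
            (MvPolynomial.coeff m p)).coeff μ := by rw [← hsum]
      _ = ∑ m ∈ p.support, (AddMonoidAlgebra.single (wsum t (Finsupp.toMultiset m))
            (MvPolynomial.coeff m p)).coeff μ := by
          rw [AddMonoidAlgebra.coeff_sum, Finsupp.finset_sum_apply]
      _ = ∑ m ∈ p.support,
          (if wsum t (Finsupp.toMultiset m) = μ then MvPolynomial.coeff m p else 0) :=
        Finset.sum_congr rfl (fun m _ => Finsupp.single_apply)
  rw [Finset.sum_eq_single m₀ (fun m hm hne => by
      rw [if_neg (hcon m hm hne)]) (fun h => absurd hm₀ h)] at happ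
  rw [if_pos rfl] at happ
  exact (MvPolynomial.mem_support_iff.mp hm₀) happ.symm

theorem ker_sub_simIdeal (t : CTree α) : ∀ (k : ℕ) (p : MvPolynomial (EdgeVar t) ℂ),
    p.support.card ≤ k → toricHom t p = 0 → p ∈ simIdeal t := by
  intro k
  induction k using Nat.strong_induction_on with
  | _ k ih =>
    intro p hcard hp
    by_cases hp0 : p = 0
    · subst hp0
      exact Ideal.zero_mem _
    obtain ⟨m₀, hm₀⟩ := MvPolynomial.support_nonempty.mpr hp0
    obtain ⟨m₁, hm₁, hne, hW⟩ := exists_partner t p hp hm₀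
    set c := MvPolynomial.coeff m₁ p with hc
    set binom : MvPolynomial (EdgeVar t) ℂ :=
      MvPolynomial.monomial m₁ 1 - MvPolynomial.monomial m₀ 1 with hbinom
    have hbin : binom ∈ simIdeal t := by
      have hrel := main_rel t (Multiset.card (Finsupp.toMultiset m₁)
          + Multiset.card (Finsupp.toMultiset m₀)) (Finsupp.toMultiset m₁)
          (Finsupp.toMultiset m₀) le_rfl hW
      unfold Rel at hrel
      rwa [prod_X_toMultiset, prod_X_toMultiset] at hrel
    set q := p - MvPolynomial.C c * binom with hq
    have hq0 : toricHom t q = 0 := by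
      rw [hq, map_sub, map_mul, hp, hbinom, map_sub, phi_monomial, phi_monomial, hW]
      ring
    have hcoeffq : ∀ m, MvPolynomial.coeff m q = MvPolynomial.coeff m p
        - c * ((if m₁ = m then (1:ℂ) else 0) - (if m₀ = m then (1:ℂ) else 0)) := by
      intro m
      rw [hq, MvPolynomial.coeff_sub, MvPolynomial.coeff_C_mul, hbinom,
        MvPolynomial.coeff_sub, MvPolynomial.coeff_monomial, MvPolynomial.coeff_monomial]
    have hqsupp : q.support ⊆ p.support.erase m₁ := by
      intro m hm
      rw [MvPolynomial.mem_support_iff] at hm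
      rw [Finset.mem_erase, MvPolynomial.mem_support_iff]
      have hmne : m ≠ m₁ := by
        rintro rfl
        apply hm
        rw [hcoeffq, if_pos rfl, if_neg (fun h : m₀ = m => hne h.symm), hc]
        ring
      refine ⟨hmne, ?_⟩
      by_cases hm0 : m = m₀
      · subst hm0
        exact MvPolynomial.mem_support_iff.mp hm₀
      · intro hcp
        apply hm
        rw [hcoeffq, if_neg (fun h : m₁ = m => hmne h.symm),
          if_neg (fun h : m₀ = m => hm0 h.symm), hcp]
        ring
    have hkcard : q.support.card < k := by
      have h1 : q.support.card ≤ (p.support.erase m₁).card := Finset.card_le_card hqsupp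
      have h2 : (p.support.erase m₁).card = p.support.card - 1 := Finset.card_erase_of_mem hm₁
      have h3 : 0 < p.support.card := Finset.card_pos.mpr ⟨m₀, hm₀⟩
      omega
    have hqmem : q ∈ simIdeal t := ih q.support.card hkcard q le_rfl hq0
    have hpq : p = q + MvPolynomial.C c * binom := by rw [hq]; ring
    rw [hpq]
    exact Ideal.add_mem _ hqmem (Ideal.mul_mem_left _ _ hbin)

end KT
end Stage5

/-- The kernel of `φ` is the binomial ideal of the relation `∼`;
consequently `ℂ[x_d : d ∈ E(Γ)]` modulo this ideal is isomorphic to the affine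
semigroup algebra `ℂ[χ(Γ)]`, the subalgebra of `ℂ[M]` generated by the `t^{w_d}`. -/
theorem kernel_toricHom_eq_simIdeal {α : Type} (t : CTree α) (ht : t.IsColoredTree) :
    RingHom.ker (toricHom t) = simIdeal t ∧
    Nonempty ((MvPolynomial (EdgeVar t) ℂ ⧸ simIdeal t) ≃ₐ[ℂ]
      (Algebra.adjoin ℂ (Set.range (fun d : EdgeVar t =>
        (AddMonoidAlgebra.single (CTree.wt t d.1) (1 : ℂ) :
          AddMonoidAlgebra ℂ (List ℕ → ℤ)))))) := by
  have hker : RingHom.ker (toricHom t) = simIdeal t := by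
    apply le_antisymm
    · intro p hp
      exact KT.ker_sub_simIdeal t p.support.card p le_rfl (RingHom.mem_ker.mp hp)
    · unfold simIdeal
      rw [Ideal.span_le]
      rintro f ⟨A, B, hdisj, hsim, rfl⟩
      rw [SetLike.mem_coe, RingHom.mem_ker]
      rw [map_sub, KT.phi_prod, KT.phi_prod]
      obtain ⟨v, hv, c₁, hc₁, c₂, hc₂, hp₁, hp₂, hA, hB⟩ := hsim
      have hA' : A = KT.pathE t v c₁ := Multiset.map_injective Subtype.val_injective
        (by rw [hA, KT.pathE_map_val])
      have hB' : B = KT.pathE t v c₂ := Multiset.map_injective Subtype.val_injective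
        (by rw [hB, KT.pathE_map_val])
      rw [hA', hB', KT.wsum_pathE t hc₁ (c₁.length - v.length) v le_rfl hv hp₁,
        KT.wsum_pathE t hc₂ (c₂.length - v.length) v le_rfl hv hp₂, sub_self]
  refine ⟨hker, ?_⟩
  have hk2 : RingHom.ker (toricHom t).rangeRestrict = simIdeal t := by
    rw [AlgHom.ker_rangeRestrict]
    exact hker
  exact ⟨(Ideal.quotientEquivAlgOfEq ℂ hk2.symm).trans
    ((Ideal.quotientKerAlgEquivOfSurjective
        (AlgHom.rangeRestrict_surjective (toricHom t))).trans
      (Subalgebra.equivOfEq _ _ (Algebra.adjoin_range_eq_range_aeval ℂ _).symm))⟩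
end
end
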